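/- arXiv:0811.1946 — 8 statements merged into one kernel-verified Lean document; each statement's English description precedes it below -/
import Mathlib

section
/- Let X be a set, and for i = 1, 2 let A_i = {1, 2, ..., M_i} (with M_i > 0) and f_i : A_i → X be a finite sequence with period p_i (the smallest positive integer p such that f_i(j) = f_i(j+p) whenever both j and j+p lie in A_i). Suppose there exist integers u and v such that for each i = v+1, v+2, ..., v+p_1+p_2, we have i ∈ A_1, u+i ∈ A_2, and f_1(i) = f_2(u+i). Then p_1 = p_2, and f_1(i) = f_2(u+i) whenever i ∈ A_1 and u+i ∈ A_2. -/
/-- `IsPeriodicWith f M p` : `p` is a period for the finite sequence `f : {1,...,M} → X`,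
i.e. `f j = f (j + p)` whenever both `j` and `j + p` lie in `{1,...,M}`. -/
def IsPeriodicWith {X : Type*} (f : ℤ → X) (M p : ℤ) : Prop :=
  ∀ j : ℤ, 1 ≤ j → j + p ≤ M → f j = f (j + p)

private lemma iter_per {X : Type*} {f : ℤ → X} {M p : ℤ} (hp : 0 < p)
    (hf : IsPeriodicWith f M p) :
    ∀ k : ℕ, ∀ a : ℤ, 1 ≤ a → a + (k : ℤ) * p ≤ M → f a = f (a + (k : ℤ) * p) := by
  intro k
  induction k with
  | zero => intro a _ _; simp
  | succ n ih =>
    intro a ha hb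
    have hcast : a + ((n : ℤ) + 1) * p = (a + p) + (n : ℤ) * p := by ring
    have hnn : (0 : ℤ) ≤ (n : ℤ) * p := mul_nonneg (Int.ofNat_nonneg n) hp.le
    have h1 : a + p ≤ M := by push_cast at hb; linarith
    have e1 := hf a ha h1
    have e2 := ih (a + p) (by linarith) (by push_cast at hb; linarith)
    push_cast
    rw [hcast, e1, e2]

private lemma transport {X : Type*} {f : ℤ → X} {M p : ℤ} (hp : 0 < p)
    (hf : IsPeriodicWith f M p) {a b k : ℤ}
    (ha1 : 1 ≤ a) (haM : a ≤ M) (hb1 : 1 ≤ b) (hbM : b ≤ M)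
    (hk : b = a + k * p) : f a = f b := by
  rcases le_total a b with h | h
  · have hk0 : 0 ≤ k := by
      by_contra hc
      push_neg at hc
      have : k ≤ -1 := by linarith
      nlinarith
    obtain ⟨n, rfl⟩ := Int.eq_ofNat_of_zero_le hk0
    rw [hk] at hbM ⊢
    exact iter_per hp hf n a ha1 hbM
  · have hk0 : 0 ≤ -k := by
      by_contra hc
      push_neg at hc
      have : 1 ≤ k := by linarith
      nlinarith
    obtain ⟨n, hn⟩ := Int.eq_ofNat_of_zero_le hk0
    have ha : a = b + (n : ℤ) * p := by rw [← hn]; rw [hk]; ring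
    rw [ha] at haM
    symm
    rw [ha]
    exact iter_per hp hf n b hb1 haM

private lemma exists_shift {p : ℤ} (hp : 0 < p) (j c : ℤ) :
    ∃ k : ℤ, c + 1 ≤ j + k * p ∧ j + k * p ≤ c + p := by
  have h1 := Int.emod_nonneg (c + p - j) (ne_of_gt hp)
  have h2 := Int.emod_lt_of_pos (c + p - j) hp
  have h3 := Int.mul_ediv_add_emod (c + p - j) p
  have hco : (c + p - j) / p * p = p * ((c + p - j) / p) := mul_comm _ _
  exact ⟨(c + p - j) / p, by nlinarith, by nlinarith⟩

theorem stmt_0 {X : Type*} (M₁ M₂ : ℤ) (hM₁ : 0 < M₁) (hM₂ : 0 < M₂)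
    (f₁ f₂ : ℤ → X) (p₁ p₂ : ℤ)
    (hp₁ : IsLeast {p : ℤ | 0 < p ∧ IsPeriodicWith f₁ M₁ p} p₁)
    (hp₂ : IsLeast {p : ℤ | 0 < p ∧ IsPeriodicWith f₂ M₂ p} p₂)
    (u v : ℤ)
    (hwin : ∀ i : ℤ, v + 1 ≤ i → i ≤ v + p₁ + p₂ →
      (1 ≤ i ∧ i ≤ M₁) ∧ (1 ≤ u + i ∧ u + i ≤ M₂) ∧ f₁ i = f₂ (u + i)) :
    p₁ = p₂ ∧ ∀ i : ℤ, 1 ≤ i → i ≤ M₁ → 1 ≤ u + i → u + i ≤ M₂ → f₁ i = f₂ (u + i) := by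
  obtain ⟨⟨hp₁pos, hper₁⟩, hmin₁⟩ := hp₁
  obtain ⟨⟨hp₂pos, hper₂⟩, hmin₂⟩ := hp₂
  -- p₁ is a period of f₂
  have hA : IsPeriodicWith f₂ M₂ p₁ := by
    intro j hj hjM
    obtain ⟨k, hk1, hk2⟩ := exists_shift hp₂pos j (u + v)
    set j' := j + k * p₂ with hj'
    -- j' - u lies in the window, and (j' - u) + p₁ too
    have hw1 := hwin (j' - u) (by linarith) (by linarith)
    have hw2 := hwin (j' - u + p₁) (by linarith) (by linarith)
    have hsub1 : u + (j' - u) = j' := by ring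
    have hsub2 : u + (j' - u + p₁) = j' + p₁ := by ring
    rw [hsub1] at hw1
    rw [hsub2] at hw2
    -- f₂ j' = f₂ (j' + p₁)
    have hmid : f₂ j' = f₂ (j' + p₁) := by
      have e1 := hw1.2.2
      have e2 := hw2.2.2
      have e3 : f₁ (j' - u) = f₁ (j' - u + p₁) :=
        hper₁ (j' - u) hw1.1.1 (by linarith [hw2.1.2])
      rw [← e1, ← e2, ← e3]
    -- transport j to j' and j + p₁ to j' + p₁
    have t1 : f₂ j = f₂ j' :=
      transport (k := k) hp₂pos hper₂ hj (by linarith) hw1.2.1.1 hw1.2.1.2 hj'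
    have t2 : f₂ (j + p₁) = f₂ (j' + p₁) :=
      transport (k := k) hp₂pos hper₂ (by linarith) hjM hw2.2.1.1 hw2.2.1.2 (by rw [hj']; ring)
    rw [t1, t2, hmid]
  -- p₂ is a period of f₁
  have hB : IsPeriodicWith f₁ M₁ p₂ := by
    intro j hj hjM
    obtain ⟨k, hk1, hk2⟩ := exists_shift hp₁pos j v
    set j' := j + k * p₁ with hj'
    have hw1 := hwin j' (by linarith) (by linarith)
    have hw2 := hwin (j' + p₂) (by linarith) (by linarith)
    have hmid : f₁ j' = f₁ (j' + p₂) := by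
      have e1 := hw1.2.2
      have e2 := hw2.2.2
      have e3 : f₂ (u + j') = f₂ (u + j' + p₂) :=
        hper₂ (u + j') hw1.2.1.1 (by have := hw2.2.1.2; linarith)
      have hre : u + (j' + p₂) = u + j' + p₂ := by ring
      rw [e1, e2, hre, ← e3]
    have t1 : f₁ j = f₁ j' :=
      transport (k := k) hp₁pos hper₁ hj (by linarith) hw1.1.1 hw1.1.2 hj'
    have t2 : f₁ (j + p₂) = f₁ (j' + p₂) :=
      transport (k := k) hp₁pos hper₁ (by linarith) hjM hw2.1.1 hw2.1.2 (by rw [hj']; ring)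
    rw [t1, t2, hmid]
  have hle1 : p₁ ≤ p₂ := hmin₁ ⟨hp₂pos, hB⟩
  have hle2 : p₂ ≤ p₁ := hmin₂ ⟨hp₁pos, hA⟩
  have hpe : p₁ = p₂ := le_antisymm hle1 hle2
  refine ⟨hpe, ?_⟩
  intro i hi1 hiM hui1 huiM
  obtain ⟨k, hk1, hk2⟩ := exists_shift hp₁pos i v
  set i' := i + k * p₁ with hi'
  have hw := hwin i' (by linarith) (by linarith)
  have t1 : f₁ i = f₁ i' :=
    transport (k := k) hp₁pos hper₁ hi1 hiM hw.1.1 hw.1.2 hi'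
  have t2 : f₂ (u + i) = f₂ (u + i') := by
    refine transport (k := k) hp₂pos hper₂ hui1 huiM hw.2.1.1 hw.2.1.2 ?_
    rw [hi', ← hpe]; ring
  rw [t1, t2, hw.2.2]
end

section
/- If p_1 ≤ p_2 are the periods of f_1 and f_2, and the two sequences agree on a window of length p_1 + p_2 (after a shift by u), then p_1 is also a period of f_2 on its whole domain, hence p_1 = p_2. -/
lemma shift_nat {X : Type*} (f : ℤ → X) (M p : ℤ) (hp : 0 < p)
    (hf : IsPeriodicWith f M p) :
    ∀ n : ℕ, ∀ a : ℤ, 1 ≤ a → a + n * p ≤ M → f a = f (a + n * p) := by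
  intro n
  induction n with
  | zero => intro a _ _; simp
  | succ n ih =>
    intro a h1 h2
    have hn : (0:ℤ) ≤ (n:ℤ) * p := by positivity
    have hcast : ((n+1 : ℕ) : ℤ) * p = p + (n:ℤ) * p := by push_cast; ring
    have step : f a = f (a + p) := hf a h1 (by rw [hcast] at h2; omega)
    have ih' : f (a + p) = f (a + p + n * p) := ih (a + p) (by omega) (by rw [hcast] at h2; omega)
    rw [step, ih', hcast]; ring_nf

lemma shift_int {X : Type*} (f : ℤ → X) (M p : ℤ) (hp : 0 < p)
    (hf : IsPeriodicWith f M p) (a t : ℤ) (h1 : 1 ≤ a) (h2 : a ≤ M)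
    (h3 : 1 ≤ a + t * p) (h4 : a + t * p ≤ M) : f a = f (a + t * p) := by
  rcases le_or_gt 0 t with ht | ht
  · obtain ⟨n, rfl⟩ : ∃ n : ℕ, t = (n:ℤ) := ⟨t.toNat, (Int.toNat_of_nonneg ht).symm⟩
    exact shift_nat f M p hp hf n a h1 h4
  · obtain ⟨n, hn⟩ : ∃ n : ℕ, -t = (n:ℤ) := ⟨(-t).toNat, (Int.toNat_of_nonneg (by omega)).symm⟩
    have := shift_nat f M p hp hf n (a + t * p) h3 (by
      have : (n:ℤ) = -t := hn.symm
      nlinarith)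
    have heq : a + t * p + (n:ℤ) * p = a := by
      have : (n:ℤ) = -t := hn.symm
      nlinarith
    rw [heq] at this
    exact this.symm

theorem stmt_1 {X : Type*} (M₁ M₂ : ℤ) (hM₁ : 0 < M₁) (hM₂ : 0 < M₂)
    (f₁ f₂ : ℤ → X) (p₁ p₂ : ℤ)
    (hp₁ : IsLeast {p : ℤ | 0 < p ∧ IsPeriodicWith f₁ M₁ p} p₁)
    (hp₂ : IsLeast {p : ℤ | 0 < p ∧ IsPeriodicWith f₂ M₂ p} p₂)
    (hle : p₁ ≤ p₂)
    (u v : ℤ)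
    (hwin : ∀ i : ℤ, v + 1 ≤ i → i ≤ v + p₁ + p₂ →
      (1 ≤ i ∧ i ≤ M₁) ∧ (1 ≤ u + i ∧ u + i ≤ M₂) ∧ f₁ i = f₂ (u + i)) :
    IsPeriodicWith f₂ M₂ p₁ ∧ p₁ = p₂ := by
  obtain ⟨⟨hp₁pos, hf₁per⟩, hp₁min⟩ := hp₁
  obtain ⟨⟨hp₂pos, hf₂per⟩, hp₂min⟩ := hp₂
  -- window bounds
  have hlo : 1 ≤ u + v + 1 := by
    have := (hwin (v+1) (by omega) (by omega)).2.1.1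
    omega
  have hhi : u + v + p₁ + p₂ ≤ M₂ := by
    have := (hwin (v+p₁+p₂) (by omega) (by omega)).2.1.2
    omega
  -- p₁-periodicity on the window
  have hwinper : ∀ j : ℤ, u + v + 1 ≤ j → j ≤ u + v + p₂ → f₂ j = f₂ (j + p₁) := by
    intro j hj1 hj2
    set i := j - u with hi
    have hw1 := hwin i (by omega) (by omega)
    have hw2 := hwin (i + p₁) (by omega) (by omega)
    have hm : i + p₁ ≤ M₁ := hw2.1.2
    have hper : f₁ i = f₁ (i + p₁) := hf₁per i (by omega) hm
    have e1 : f₂ j = f₁ i := by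
      have := hw1.2.2
      rw [this]; congr 1; omega
    have e2 : f₁ (i + p₁) = f₂ (j + p₁) := by
      have := hw2.2.2
      rw [this]; congr 1; omega
    rw [e1, hper, e2]
  have hper : IsPeriodicWith f₂ M₂ p₁ := by
    intro j hj1 hj2
    -- choose t so that j + t * p₂ lands in [u+v+1, u+v+p₂]
    set t := (u + v + p₂ - j) / p₂ with ht
    have hmod1 : 0 ≤ (u + v + p₂ - j) % p₂ := Int.emod_nonneg _ (by omega)
    have hmod2 : (u + v + p₂ - j) % p₂ < p₂ := Int.emod_lt_of_pos _ hp₂pos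
    have hdm : p₂ * t + (u + v + p₂ - j) % p₂ = u + v + p₂ - j := Int.mul_ediv_add_emod _ _
    have hb1 : u + v + 1 ≤ j + t * p₂ := by nlinarith
    have hb2 : j + t * p₂ ≤ u + v + p₂ := by nlinarith
    have s1 : f₂ j = f₂ (j + t * p₂) :=
      shift_int f₂ M₂ p₂ hp₂pos hf₂per j t hj1 (by omega) (by omega) (by omega)
    have s2 : f₂ (j + p₁) = f₂ (j + p₁ + t * p₂) := by
      have := shift_int f₂ M₂ p₂ hp₂pos hf₂per (j + p₁) t (by omega) hj2 (by omega) (by omega)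
      convert this using 2
    have s3 : f₂ (j + t * p₂) = f₂ (j + t * p₂ + p₁) := hwinper _ hb1 hb2
    rw [s1, s3, s2]
    congr 1; ring
  exact ⟨hper, le_antisymm hle (hp₂min ⟨hp₁pos, hper⟩)⟩
end

section
/- Let Γ be a finite simple graph and let Γ_1, Γ_2 be induced subgraphs with Γ = Γ_1 ∪ Γ_2 and K = Γ_1 ∩ Γ_2 a complete subgraph. Then the set of maximal complete subgraphs satisfies: K(Γ_1) ∩ K(Γ_2) ⊆ {K} and K(Γ) ⊆ K(Γ_1) ∪ K(Γ_2) ⊆ K(Γ) ∪ {K}. -/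
/-- `MaxCliqueIn G S K` : `K` is a maximal clique of the induced subgraph of `G` on `S`. -/
def MaxCliqueIn {V : Type*} (G : SimpleGraph V) (S : Set V) (K : Set V) : Prop :=
  K ⊆ S ∧ G.IsClique K ∧ ∀ d : Set V, d ⊆ S → G.IsClique d → K ⊆ d → K = d

lemma clique_sub {V : Type*} (G : SimpleGraph V) (S₁ S₂ : Set V)
    (hcover : S₁ ∪ S₂ = Set.univ)
    (hedges : ∀ u v : V, G.Adj u v → (u ∈ S₁ ∧ v ∈ S₁) ∨ (u ∈ S₂ ∧ v ∈ S₂)) :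
    ∀ d : Set V, G.IsClique d → d ⊆ S₁ ∨ d ⊆ S₂ := by
  intro d hd
  by_contra h
  push_neg at h
  obtain ⟨x, hxd, hx1⟩ := Set.not_subset.mp h.1
  obtain ⟨y, hyd, hy2⟩ := Set.not_subset.mp h.2
  have hx2 : x ∈ S₂ := by
    have hx : x ∈ S₁ ∪ S₂ := hcover ▸ Set.mem_univ x
    exact hx.resolve_left hx1
  have hy1 : y ∈ S₁ := by
    have hy : y ∈ S₁ ∪ S₂ := hcover ▸ Set.mem_univ y
    exact hy.resolve_right hy2
  have hne : x ≠ y := fun h => hx1 (h ▸ hy1)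
  rcases hedges x y (hd hxd hyd hne) with ⟨h1, _⟩ | ⟨_, h2⟩
  · exact hx1 h1
  · exact hy2 h2

lemma max_aux {V : Type*} (G : SimpleGraph V) (S₁ S₂ : Set V)
    (hcover : S₁ ∪ S₂ = Set.univ)
    (hedges : ∀ u v : V, G.Adj u v → (u ∈ S₁ ∧ v ∈ S₁) ∨ (u ∈ S₂ ∧ v ∈ S₂))
    (hK : G.IsClique (S₁ ∩ S₂))
    (K : Set V) (hm : MaxCliqueIn G S₁ K) :
    MaxCliqueIn G Set.univ K ∨ K = S₁ ∩ S₂ := by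
  obtain ⟨hK1, hKc, hKm⟩ := hm
  by_cases hu : MaxCliqueIn G Set.univ K
  · exact Or.inl hu
  · right
    unfold MaxCliqueIn at hu
    push_neg at hu
    obtain ⟨d, hdu, hdc, hKd, hne⟩ := hu (Set.subset_univ K) hKc
    rcases clique_sub G S₁ S₂ hcover hedges d hdc with h | h
    · exact absurd (hKm d h hdc hKd) hne
    · have hK2 : K ⊆ S₂ := hKd.trans h
      exact hKm (S₁ ∩ S₂) Set.inter_subset_left hK (Set.subset_inter hK1 hK2)

theorem stmt_7 {V : Type*} [Fintype V] (G : SimpleGraph V) (S₁ S₂ : Set V)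
    (hcover : S₁ ∪ S₂ = Set.univ)
    (hedges : ∀ u v : V, G.Adj u v → (u ∈ S₁ ∧ v ∈ S₁) ∨ (u ∈ S₂ ∧ v ∈ S₂))
    (hK : G.IsClique (S₁ ∩ S₂)) :
    ({K | MaxCliqueIn G S₁ K} ∩ {K | MaxCliqueIn G S₂ K} ⊆ {S₁ ∩ S₂}) ∧
    ({K | MaxCliqueIn G Set.univ K} ⊆ {K | MaxCliqueIn G S₁ K} ∪ {K | MaxCliqueIn G S₂ K}) ∧
    ({K | MaxCliqueIn G S₁ K} ∪ {K | MaxCliqueIn G S₂ K}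
      ⊆ {K | MaxCliqueIn G Set.univ K} ∪ {S₁ ∩ S₂}) := by
  refine ⟨?_, ?_, ?_⟩
  · rintro K ⟨⟨hK1, hKc, hKm⟩, ⟨hK2, -, -⟩⟩
    exact hKm (S₁ ∩ S₂) Set.inter_subset_left hK (Set.subset_inter hK1 hK2)
  · rintro K ⟨-, hKc, hKm⟩
    rcases clique_sub G S₁ S₂ hcover hedges K hKc with h | h
    · exact Or.inl ⟨h, hKc, fun d hd hdc hKd => hKm d (Set.subset_univ d) hdc hKd⟩
    · exact Or.inr ⟨h, hKc, fun d hd hdc hKd => hKm d (Set.subset_univ d) hdc hKd⟩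
  · rintro K (hm | hm)
    · exact (max_aux G S₁ S₂ hcover hedges hK K hm).imp id id
    · have := max_aux G S₂ S₁ (by rw [Set.union_comm]; exact hcover)
        (fun u v h => (hedges u v h).symm) (by rw [Set.inter_comm]; exact hK) K hm
      rcases this with h | h
      · exact Or.inl h
      · exact Or.inr (by rw [Set.inter_comm]; exact h)
end

section
/- If a finite simple graph Γ is a complete graph amalgamation of Γ_1 and Γ_2 with K = Γ_1 ∩ Γ_2 not a maximal clique of Γ_1 nor of Γ_2, then the set of maximal cliques of Γ is the disjoint union of the sets of maximal cliques of Γ_1 and of Γ_2. -/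
theorem stmt_8 {V : Type*} [Fintype V] (G : SimpleGraph V) (S₁ S₂ : Set V)
    (hcover : S₁ ∪ S₂ = Set.univ)
    (hedges : ∀ u v : V, G.Adj u v → (u ∈ S₁ ∧ v ∈ S₁) ∨ (u ∈ S₂ ∧ v ∈ S₂))
    (hK : G.IsClique (S₁ ∩ S₂))
    (hK₁ : ¬ MaxCliqueIn G S₁ (S₁ ∩ S₂))
    (hK₂ : ¬ MaxCliqueIn G S₂ (S₁ ∩ S₂)) :
    {K | MaxCliqueIn G Set.univ K} = {K | MaxCliqueIn G S₁ K} ∪ {K | MaxCliqueIn G S₂ K} ∧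
    {K | MaxCliqueIn G S₁ K} ∩ {K | MaxCliqueIn G S₂ K} = ∅ := by
  -- every clique of G lies entirely in S₁ or in S₂
  have split : ∀ C : Set V, G.IsClique C → C ⊆ S₁ ∨ C ⊆ S₂ := by
    intro C hC
    by_contra h
    push_neg at h
    obtain ⟨u, hu, hu1⟩ := Set.not_subset.mp h.1
    obtain ⟨v, hv, hv2⟩ := Set.not_subset.mp h.2
    have hu2 : u ∈ S₂ := by
      have := Set.mem_univ u; rw [← hcover] at this; rcases this with h'|h' <;> tauto
    have hv1 : v ∈ S₁ := by
      have := Set.mem_univ v; rw [← hcover] at this; rcases this with h'|h' <;> tauto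
    have hne : u ≠ v := fun e => hu1 (e ▸ hv1)
    rcases hedges u v (hC hu hv hne) with ⟨h1, _⟩ | ⟨_, h2⟩
    · exact hu1 h1
    · exact hv2 h2
  -- a maximal clique of S₁ is a maximal clique of G
  have max1 : ∀ K : Set V, MaxCliqueIn G S₁ K → MaxCliqueIn G Set.univ K := by
    intro K ⟨hKS, hKc, hKm⟩
    refine ⟨Set.subset_univ _, hKc, fun d _ hd hKd => ?_⟩
    rcases split d hd with h | h
    · exact hKm d h hd hKd
    · have hsub : K ⊆ S₁ ∩ S₂ := Set.subset_inter hKS (hKd.trans h)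
      have := hKm (S₁ ∩ S₂) Set.inter_subset_left hK hsub
      exact absurd (this ▸ (⟨hKS, hKc, hKm⟩ : MaxCliqueIn G S₁ K)) hK₁
  have max2 : ∀ K : Set V, MaxCliqueIn G S₂ K → MaxCliqueIn G Set.univ K := by
    intro K ⟨hKS, hKc, hKm⟩
    refine ⟨Set.subset_univ _, hKc, fun d _ hd hKd => ?_⟩
    rcases split d hd with h | h
    · have hsub : K ⊆ S₁ ∩ S₂ := Set.subset_inter (hKd.trans h) hKS
      have := hKm (S₁ ∩ S₂) Set.inter_subset_right hK hsub
      exact absurd (this ▸ (⟨hKS, hKc, hKm⟩ : MaxCliqueIn G S₂ K)) hK₂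
    · exact hKm d h hd hKd
  constructor
  · ext K
    simp only [Set.mem_setOf_eq, Set.mem_union]
    constructor
    · rintro ⟨_, hKc, hKm⟩
      rcases split K hKc with h | h
      · exact Or.inl ⟨h, hKc, fun d hd hdc hKd => hKm d (Set.subset_univ _) hdc hKd⟩
      · exact Or.inr ⟨h, hKc, fun d hd hdc hKd => hKm d (Set.subset_univ _) hdc hKd⟩
    · rintro (h | h)
      · exact max1 K h
      · exact max2 K h
  · ext K
    simp only [Set.mem_inter_iff, Set.mem_setOf_eq, Set.mem_empty_iff_false, iff_false]
    rintro ⟨⟨hKS1, hKc, hKm⟩, ⟨hKS2, _, _⟩⟩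
    have := hKm (S₁ ∩ S₂) Set.inter_subset_left hK (Set.subset_inter hKS1 hKS2)
    exact hK₁ (this ▸ (⟨hKS1, hKc, hKm⟩ : MaxCliqueIn G S₁ K))
end

section
/- Every finite chordal graph is either complete or can be written as the union of two proper induced subgraphs whose intersection is a complete graph (possibly empty). -/
/-- A simple graph is chordal if it has no induced cycle of length at least 4. -/
def IsChordal {V : Type*} (G : SimpleGraph V) : Prop :=
  ∀ n : ℕ, 4 ≤ n → ∀ f : Fin n ↪ V,
    ¬ (∀ i j : Fin n, G.Adj (f i) (f j) ↔ (SimpleGraph.cycleGraph n).Adj i j)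


section ChordAux

variable {V : Type*}

/-- Reachability by a chain of adjacent vertices avoiding the set `C`. -/
def CReach (G : SimpleGraph V) (C : Set V) (u v : V) : Prop :=
  ∃ (m : ℕ) (f : ℕ → V), f 0 = u ∧ f m = v ∧ (∀ i < m, G.Adj (f i) (f (i+1))) ∧
    (∀ i ≤ m, f i ∉ C)

lemma creach_refl (G : SimpleGraph V) {C : Set V} {u : V} (hu : u ∉ C) : CReach G C u u :=
  ⟨0, fun _ => u, rfl, rfl, fun i hi => absurd hi (by omega), fun _ _ => hu⟩

lemma creach_symm {G : SimpleGraph V} {C : Set V} {u v : V} (h : CReach G C u v) :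
    CReach G C v u := by
  obtain ⟨m, f, h0, hm, hadj, hmem⟩ := h
  refine ⟨m, fun i => f (m - i), by simpa using hm, by simpa using h0, ?_, ?_⟩
  · intro i hi
    have := (hadj (m - i - 1) (by omega)).symm
    rw [show m - i - 1 + 1 = m - i by omega] at this
    have e2 : m - (i+1) = m - i - 1 := by omega
    simpa [e2] using this
  · intro i _; exact hmem (m - i) (by omega)

lemma creach_trans {G : SimpleGraph V} {C : Set V} {u v w : V}
    (h1 : CReach G C u v) (h2 : CReach G C v w) : CReach G C u w := by
  classical
  obtain ⟨m, f, hf0, hfm, hfadj, hfmem⟩ := h1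
  obtain ⟨l, g, hg0, hgl, hgadj, hgmem⟩ := h2
  set F : ℕ → V := fun i => if i ≤ m then f i else g (i - m) with hF
  have hval1 : ∀ i ≤ m, F i = f i := fun i hi => by simp [hF, hi]
  have hval2 : ∀ i, m ≤ i → F i = g (i - m) := by
    intro i hi
    by_cases h'' : i ≤ m
    · have h3 : i = m := le_antisymm h'' hi
      subst h3
      rw [hF]
      simp only [le_refl, if_pos, Nat.sub_self]
      rw [hfm, hg0]
    · simp [hF, h'']
  refine ⟨m + l, F, by rw [hval1 0 (by omega), hf0],
    by rw [hval2 (m+l) (by omega)]; simpa using hgl, ?_, ?_⟩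
  · intro i hi
    rcases Nat.lt_or_ge i m with h' | h'
    · rw [hval1 i (by omega), hval1 (i+1) (by omega)]; exact hfadj i h'
    · rw [hval2 i h', hval2 (i+1) (by omega)]
      have := hgadj (i - m) (by omega)
      rwa [show i + 1 - m = i - m + 1 by omega]
  · intro i hi
    rcases Nat.lt_or_ge i m with h' | h'
    · rw [hval1 i (by omega)]; exact hfmem i (by omega)
    · rw [hval2 i h']; exact hgmem (i - m) (by omega)

lemma creach_step {G : SimpleGraph V} {C : Set V} {u v w : V} (h1 : CReach G C u v)
    (hadj : G.Adj v w) (hw : w ∉ C) : CReach G C u w := by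
  classical
  obtain ⟨m, f, hf0, hfm, hfadj, hfmem⟩ := h1
  set F : ℕ → V := fun i => if i ≤ m then f i else w with hF
  have hval1 : ∀ i ≤ m, F i = f i := fun i hi => by simp [hF, hi]
  have hval2 : F (m + 1) = w := by simp [hF]
  refine ⟨m + 1, F, by rw [hval1 0 (by omega), hf0], hval2, ?_, ?_⟩
  · intro i hi
    rcases Nat.lt_or_ge i m with h' | h'
    · rw [hval1 i (by omega), hval1 (i+1) (by omega)]; exact hfadj i h'
    · have h3 : i = m := by omega
      subst h3
      rw [hval1 i le_rfl, hval2, hfm]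
      exact hadj
  · intro i hi
    by_cases h' : i ≤ m
    · rw [hval1 i h']; exact hfmem i h'
    · rw [show i = m + 1 by omega, hval2]; exact hw

end ChordAux

section ChordAux2

variable {V : Type*}

lemma exists_nbr {G : SimpleGraph V} {C : Set V} {a b x : V}
    (hC : ¬ CReach G C a b) (haC : a ∉ C) (hx : x ∈ C)
    (hr : CReach G (C \ {x}) a b) :
    ∃ u, (u ∉ C ∧ CReach G C a u) ∧ G.Adj u x := by
  obtain ⟨m, f, hf0, hfm, hadj, hmem⟩ := hr
  have hne : {i | i ≤ m ∧ f i ∈ C}.Nonempty := by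
    by_contra hc
    rw [Set.not_nonempty_iff_eq_empty] at hc
    apply hC
    refine ⟨m, f, hf0, hfm, hadj, fun i hi hiC => ?_⟩
    have : i ∈ {i | i ≤ m ∧ f i ∈ C} := ⟨hi, hiC⟩
    rw [hc] at this
    exact this
  set i₀ := sInf {i | i ≤ m ∧ f i ∈ C} with hi₀
  obtain ⟨hi₀m, hi₀C⟩ : i₀ ≤ m ∧ f i₀ ∈ C := Nat.sInf_mem hne
  have hfx : f i₀ = x := by
    have h1 := hmem i₀ hi₀m
    rw [Set.mem_diff] at h1
    push_neg at h1
    exact h1 hi₀C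
  have hi₀0 : i₀ ≠ 0 := by
    intro h
    rw [h, hf0] at hi₀C
    exact haC hi₀C
  have hprefix : ∀ k, k < i₀ → f k ∉ C := fun k hk hkC =>
    Nat.notMem_of_lt_sInf hk ⟨by omega, hkC⟩
  refine ⟨f (i₀ - 1), ⟨hprefix _ (by omega),
    ⟨i₀ - 1, f, hf0, rfl, fun k hk => hadj k (by omega), fun k hk => hprefix k (by omega)⟩⟩, ?_⟩
  have h2 := hadj (i₀ - 1) (by omega)
  rwa [show i₀ - 1 + 1 = i₀ by omega, hfx] at h2

lemma side_chain {G : SimpleGraph V} {C : Set V} {a x y : V}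
    (hu : ∃ u, (u ∉ C ∧ CReach G C a u) ∧ G.Adj u x)
    (hw : ∃ w, (w ∉ C ∧ CReach G C a w) ∧ G.Adj w y) :
    ∃ (m : ℕ) (f : ℕ → V), f 0 = x ∧ f m = y ∧ (∀ i < m, G.Adj (f i) (f (i+1))) ∧
      ∀ i, 0 < i → i < m → (f i ∉ C ∧ CReach G C a (f i)) := by
  classical
  obtain ⟨u, ⟨huC, hru⟩, hux⟩ := hu
  obtain ⟨w, ⟨hwC, hrw⟩, hwy⟩ := hw
  obtain ⟨m, f, hf0, hfm, hadj, hmem⟩ := creach_trans (creach_symm hru) hrw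
  have hfA : ∀ i ≤ m, f i ∉ C ∧ CReach G C a (f i) := by
    intro i hi
    exact ⟨hmem i hi, creach_trans hru
      ⟨i, f, hf0, rfl, fun k hk => hadj k (by omega), fun k hk => hmem k (by omega)⟩⟩
  set F : ℕ → V := fun k => if k = 0 then x else if k ≤ m + 1 then f (k - 1) else y with hF
  have hv0 : F 0 = x := by simp [hF]
  have hv1 : ∀ k, 0 < k → k ≤ m + 1 → F k = f (k - 1) := by
    intro k h1 h2
    simp [hF, show k ≠ 0 by omega, h2]
  have hv2 : F (m + 2) = y := by simp [hF]
  refine ⟨m + 2, F, hv0, hv2, ?_, ?_⟩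
  · intro i hi
    rcases Nat.eq_zero_or_pos i with h1 | h1
    · subst h1
      rw [hv0, hv1 1 (by omega) (by omega)]
      simpa [hf0] using hux.symm
    · rcases Nat.lt_or_ge i (m + 1) with h2 | h2
      · rw [hv1 i (by omega) (by omega), hv1 (i+1) (by omega) (by omega)]
        have := hadj (i - 1) (by omega)
        rwa [show i + 1 - 1 = i - 1 + 1 by omega]
      · have h3 : i = m + 1 := by omega
        subst h3
        rw [hv1 (m+1) (by omega) (by omega), hv2]
        simpa [hfm] using hwy
  · intro i h1 h2
    rw [hv1 i h1 (by omega)]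
    exact hfA (i - 1) (by omega)

lemma exists_min_chain (G : SimpleGraph V) (S : Set V) {x y : V}
    (hxy : x ≠ y) (hnadj : ¬ G.Adj x y)
    (hex : ∃ (m : ℕ) (f : ℕ → V), f 0 = x ∧ f m = y ∧ (∀ i < m, G.Adj (f i) (f (i+1))) ∧
      ∀ i, 0 < i → i < m → f i ∈ S) :
    ∃ (m : ℕ) (f : ℕ → V), 2 ≤ m ∧ f 0 = x ∧ f m = y ∧ (∀ i < m, G.Adj (f i) (f (i+1))) ∧
      (∀ i, 0 < i → i < m → f i ∈ S) ∧ (∀ i j, i < j → j ≤ m → f i ≠ f j) ∧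
      (∀ i j, i + 1 < j → j ≤ m → ¬ G.Adj (f i) (f j)) := by
  classical
  set P : ℕ → Prop := fun m => ∃ f : ℕ → V, f 0 = x ∧ f m = y ∧
    (∀ i < m, G.Adj (f i) (f (i+1))) ∧ ∀ i, 0 < i → i < m → f i ∈ S with hP
  have hne : {k | P k}.Nonempty := by
    obtain ⟨m, f, h1, h2, h3, h4⟩ := hex
    exact ⟨m, f, h1, h2, h3, h4⟩
  obtain ⟨f, hf0, hfm, hfadj, hfS⟩ : P (sInf {k | P k}) := Nat.sInf_mem hne
  set m := sInf {k | P k} with hm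
  have hmin : ∀ k, k < m → ¬ P k := fun k hk => Nat.notMem_of_lt_sInf hk
  have splice : ∀ i s, 1 ≤ s → i + s + 1 ≤ m → G.Adj (f i) (f (i + s + 1)) → False := by
    intro i s hs hle hadj
    apply hmin (m - s) (by omega)
    set g : ℕ → V := fun k => if k ≤ i then f k else f (k + s) with hg
    have hgval1 : ∀ k ≤ i, g k = f k := fun k hk => by simp [hg, hk]
    have hgval2 : ∀ k, i < k → g k = f (k + s) := fun k hk => by
      simp [hg, show ¬ (k ≤ i) by omega]
    refine ⟨g, by rw [hgval1 0 (by omega), hf0], ?_, ?_, ?_⟩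
    · rw [hgval2 (m - s) (by omega), show m - s + s = m by omega, hfm]
    · intro k hk
      rcases lt_trichotomy k i with h1 | h1 | h1
      · rw [hgval1 k (by omega), hgval1 (k+1) (by omega)]
        exact hfadj k (by omega)
      · subst h1
        rw [hgval1 k le_rfl, hgval2 (k+1) (by omega), show k + 1 + s = k + s + 1 by omega]
        exact hadj
      · rw [hgval2 k h1, hgval2 (k+1) (by omega), show k + 1 + s = k + s + 1 by omega]
        exact hfadj (k + s) (by omega)
    · intro k hk1 hk2
      by_cases h' : k ≤ i
      · rw [hgval1 k h']
        exact hfS k hk1 (by omega)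
      · rw [hgval2 k (by omega)]
        exact hfS (k + s) (by omega) (by omega)
  have hm0 : m ≠ 0 := by
    intro h
    apply hxy
    rw [← hf0, ← hfm, h]
  have hm1 : m ≠ 1 := by
    intro h
    apply hnadj
    have := hfadj 0 (by omega)
    rwa [hf0, show (0:ℕ) + 1 = m by omega, hfm] at this
  have hinj : ∀ i j, i < j → j ≤ m → f i ≠ f j := by
    intro i j hij hjm heq
    rcases Nat.eq_or_lt_of_le hjm with h1 | h1
    · apply hmin i (by omega)
      refine ⟨f, hf0, by rw [heq, h1, hfm], fun k hk => hfadj k (by omega),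
        fun k hk1 hk2 => hfS k hk1 (by omega)⟩
    · apply splice i (j - i) (by omega) (by omega)
      rw [show i + (j - i) + 1 = j + 1 by omega, heq]
      exact hfadj j (by omega)
  refine ⟨m, f, by omega, hf0, hfm, hfadj, hfS, hinj, ?_⟩
  intro i j hij hjm hadj
  apply splice i (j - i - 1) (by omega) (by omega)
  rwa [show i + (j - i - 1) + 1 = j by omega]

lemma fin_sub_val {n : ℕ} (i j : Fin n) :
    (i - j).val = if j.val ≤ i.val then i.val - j.val else n - (j.val - i.val) := by
  have hi := i.isLt
  have hj := j.isLt
  rw [Fin.sub_def]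
  simp only
  split_ifs with h
  · rw [show n - j.val + i.val = (i.val - j.val) + n by omega, Nat.add_mod_right,
      Nat.mod_eq_of_lt (by omega)]
  · rw [Nat.mod_eq_of_lt (by omega)]
    omega

end ChordAux2

section ChordAux3

variable {V : Type*}

lemma no_cycle {G : SimpleGraph V} (hch : IsChordal G) {A B : Set V} {x y : V} {m l : ℕ}
    {f g : ℕ → V}
    (hAB : ∀ u ∈ A, ∀ v ∈ B, u ≠ v ∧ ¬ G.Adj u v) (hxB : x ∉ B) (hyB : y ∉ B)
    (hm : 2 ≤ m) (hf0 : f 0 = x) (hfm : f m = y)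
    (hfadj : ∀ i < m, G.Adj (f i) (f (i+1)))
    (hfA : ∀ i, 0 < i → i < m → f i ∈ A)
    (hfinj : ∀ i j, i < j → j ≤ m → f i ≠ f j)
    (hfch : ∀ i j, i + 1 < j → j ≤ m → ¬ G.Adj (f i) (f j))
    (hl : 2 ≤ l) (hg0 : g 0 = x) (hgl : g l = y)
    (hgadj : ∀ i < l, G.Adj (g i) (g (i+1)))
    (hgB : ∀ i, 0 < i → i < l → g i ∈ B)
    (hginj : ∀ i j, i < j → j ≤ l → g i ≠ g j)
    (hgch : ∀ i j, i + 1 < j → j ≤ l → ¬ G.Adj (g i) (g j)) : False := by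
  classical
  set n := m + l with hn
  set h : ℕ → V := fun k => if k ≤ m then f k else g (n - k) with hh
  have hfval : ∀ k ≤ m, h k = f k := fun k hk => by simp [hh, hk]
  have hfact : ∀ k, m ≤ k → h k = g (n - k) := by
    intro k hk
    by_cases h' : k ≤ m
    · have h3 : k = m := le_antisymm h' hk
      subst h3
      rw [hfval k le_rfl, hfm, show n - k = l by omega, hgl]
    · simp [hh, h']
  have hadj : ∀ k < n, G.Adj (h k) (h (k+1)) := by
    intro k hk
    rcases Nat.lt_or_ge k m with h1 | h1
    · rw [hfval k (by omega), hfval (k+1) (by omega)]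
      exact hfadj k h1
    · rw [hfact k h1, hfact (k+1) (by omega)]
      have h2 := hgadj (n - (k+1)) (by omega)
      rw [show n - (k+1) + 1 = n - k by omega] at h2
      exact h2.symm
  have hwrap : G.Adj (h 0) (h (n-1)) := by
    rw [hfval 0 (by omega), hfact (n-1) (by omega), hf0, show n - (n-1) = 1 by omega, ← hg0]
    exact hgadj 0 (by omega)
  have hinj : ∀ i j, i < j → j < n → h i ≠ h j := by
    intro i j hij hjn
    rcases Nat.lt_or_ge j (m+1) with h1 | h1
    · rw [hfval i (by omega), hfval j (by omega)]
      exact hfinj i j hij (by omega)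
    · rcases Nat.lt_or_ge i m with h2 | h2
      · rw [hfval i (by omega), hfact j (by omega)]
        have hgB' : g (n - j) ∈ B := hgB (n - j) (by omega) (by omega)
        rcases Nat.eq_zero_or_pos i with h3 | h3
        · subst h3
          rw [hf0]
          intro he
          exact hxB (he ▸ hgB')
        · exact (hAB (f i) (hfA i h3 h2) _ hgB').1
      · rw [hfact i h2, hfact j (by omega)]
        intro he
        exact hginj (n - j) (n - i) (by omega) (by omega) he.symm
  have hnonadj : ∀ i j, i < j → j < n → j ≠ i + 1 → ¬ (i = 0 ∧ j = n - 1) →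
      ¬ G.Adj (h i) (h j) := by
    intro i j hij hjn hcons hwrap'
    rcases Nat.lt_or_ge j (m+1) with h1 | h1
    · rw [hfval i (by omega), hfval j (by omega)]
      exact hfch i j (by omega) (by omega)
    · rcases Nat.lt_or_ge i m with h2 | h2
      · rw [hfval i (by omega), hfact j (by omega)]
        rcases Nat.eq_zero_or_pos i with h3 | h3
        · subst h3
          rw [hf0, ← hg0]
          have hne1 : n - j ≠ 1 := fun he => hwrap' ⟨rfl, by omega⟩
          exact hgch 0 (n - j) (by omega) (by omega)
        · have hgB' : g (n - j) ∈ B := hgB (n - j) (by omega) (by omega)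
          exact (hAB (f i) (hfA i h3 h2) _ hgB').2
      · rw [hfact i h2, hfact j (by omega)]
        intro hadj'
        exact hgch (n - j) (n - i) (by omega) (by omega) hadj'.symm
  have h4 : 4 ≤ n := by omega
  have key : ∀ p q : ℕ, p < q → q < n →
      (G.Adj (h p) (h q) ↔ (q = p + 1 ∨ (p = 0 ∧ q = n - 1))) := by
    intro p q hpq hqn
    constructor
    · intro had
      by_contra hcon
      push_neg at hcon
      exact hnonadj p q hpq hqn hcon.1 (fun hpair => hcon.2 hpair.1 hpair.2) had
    · intro hor
      rcases hor with h' | ⟨h0, h1⟩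
      · subst h'
        exact hadj p (by omega)
      · subst h0
        rw [h1]
        exact hwrap
  set F : Fin n ↪ V := ⟨fun i => h i.val, by
    intro i j he
    by_contra hne
    rcases Nat.lt_or_ge i.val j.val with h' | h'
    · exact hinj i.val j.val h' j.isLt he
    · rcases Nat.lt_or_ge j.val i.val with h'' | h''
      · exact hinj j.val i.val h'' i.isLt he.symm
      · exact hne (Fin.ext (by omega))⟩ with hFdef
  apply hch n h4 F
  intro i j
  have hiv := i.isLt
  have hjv := j.isLt
  rw [SimpleGraph.cycleGraph_adj', fin_sub_val, fin_sub_val]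
  show G.Adj (h i.val) (h j.val) ↔ _
  rcases lt_trichotomy i.val j.val with h' | h' | h'
  · rw [key i.val j.val h' hjv, if_neg (by omega), if_pos (by omega)]
    omega
  · have : i = j := Fin.ext h'
    subst this
    simp only [le_refl, ite_true, Nat.sub_self]
    constructor
    · intro had
      exact absurd had (G.irrefl)
    · intro hor
      exact absurd hor (by omega)
  · rw [G.adj_comm, key j.val i.val h' hiv, if_pos (by omega), if_neg (by omega)]
    omega

end ChordAux3

theorem stmt_12 {V : Type*} [Fintype V] (G : SimpleGraph V) (h : IsChordal G) :
    G.IsClique Set.univ ∨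
    ∃ S₁ S₂ : Set V, S₁ ≠ Set.univ ∧ S₂ ≠ Set.univ ∧ S₁ ∪ S₂ = Set.univ ∧
      G.IsClique (S₁ ∩ S₂) ∧
      ∀ u v : V, G.Adj u v → (u ∈ S₁ ∧ v ∈ S₁) ∨ (u ∈ S₂ ∧ v ∈ S₂) := by
  classical
  by_cases hcl : G.IsClique Set.univ
  · exact Or.inl hcl
  right
  have hab : ∃ a b : V, a ≠ b ∧ ¬ G.Adj a b := by
    by_contra hc
    push_neg at hc
    apply hcl
    rw [SimpleGraph.isClique_iff]
    intro u _ v _ huv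
    exact hc u v huv
  obtain ⟨a, b, hab, hnadj⟩ := hab
  have hsep0 : a ∉ (Set.univ \ {a, b} : Set V) ∧ b ∉ (Set.univ \ {a, b} : Set V) ∧
      ¬ CReach G (Set.univ \ {a, b}) a b := by
    refine ⟨by simp, by simp, ?_⟩
    rintro ⟨mm, f, hf0, hfm, hadj', hmem⟩
    rcases Nat.eq_zero_or_pos mm with h0 | h0
    · rw [h0] at hfm
      exact hab (hf0.symm.trans hfm)
    · have h1 := hmem 1 (by omega)
      simp only [Set.mem_diff, Set.mem_univ, true_and, Set.mem_insert_iff,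
        Set.mem_singleton_iff, not_not] at h1
      have hadj1 := hadj' 0 h0
      rw [hf0] at hadj1
      rcases h1 with h1 | h1
      · rw [h1] at hadj1
        exact G.irrefl hadj1
      · rw [h1] at hadj1
        exact hnadj hadj1
  have hne : {k | ∃ C : Set V,
      (a ∉ C ∧ b ∉ C ∧ ¬ CReach G C a b) ∧ C.ncard = k}.Nonempty :=
    ⟨_, Set.univ \ {a, b}, hsep0, rfl⟩
  obtain ⟨C, hC, hCcard⟩ := Nat.sInf_mem hne
  obtain ⟨haC, hbC, hreach⟩ := hC
  have hmin : ∀ C' : Set V, C'.ncard < C.ncard → a ∉ C' → b ∉ C' → CReach G C' a b := by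
    intro C' hlt ha' hb'
    by_contra hcr
    have hmem : C'.ncard ∈ {k | ∃ C : Set V,
        (a ∉ C ∧ b ∉ C ∧ ¬ CReach G C a b) ∧ C.ncard = k} := ⟨C', ⟨ha', hb', hcr⟩, rfl⟩
    exact Nat.notMem_of_lt_sInf (by rw [← hCcard]; exact hlt) hmem
  have hmin' : ∀ z ∈ C, CReach G (C \ {z}) a b := fun z hz =>
    hmin _ (Set.ncard_diff_singleton_lt_of_mem hz (Set.toFinite C))
      (fun hmem => haC hmem.1) (fun hmem => hbC hmem.1)
  set A : Set V := {v | v ∉ C ∧ CReach G C a v} with hAdef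
  set B : Set V := {v | v ∉ C ∧ CReach G C b v} with hBdef
  have haA : a ∈ A := ⟨haC, creach_refl G haC⟩
  have hbA : b ∉ A := fun hmem => hreach hmem.2
  have hAB : ∀ u ∈ A, ∀ v ∈ B, u ≠ v ∧ ¬ G.Adj u v := by
    intro u hu v hv
    constructor
    · rintro rfl
      exact hreach (creach_trans hu.2 (creach_symm hv.2))
    · intro hadj
      exact hreach (creach_trans (creach_step hu.2 hadj hv.1) (creach_symm hv.2))
  have hstepA : ∀ u ∈ A, ∀ v, G.Adj u v → v ∉ C → v ∈ A :=
    fun u hu v hadj hvC => ⟨hvC, creach_step hu.2 hadj hvC⟩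
  have hreachb : ¬ CReach G C b a := fun hr => hreach (creach_symm hr)
  have hclique : G.IsClique C := by
    rw [SimpleGraph.isClique_iff]
    intro x hx y hy hxy
    by_contra hnxy
    have hnbrAx := exists_nbr hreach haC hx (hmin' x hx)
    have hnbrAy := exists_nbr hreach haC hy (hmin' y hy)
    have hnbrBx := exists_nbr hreachb hbC hx (creach_symm (hmin' x hx))
    have hnbrBy := exists_nbr hreachb hbC hy (creach_symm (hmin' y hy))
    obtain ⟨m, f, hm2, hf0, hfm, hfadj, hfS, hfinj, hfch⟩ :=
      exists_min_chain G A hxy hnxy (side_chain hnbrAx hnbrAy)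
    obtain ⟨l, g, hl2, hg0, hgl, hgadj, hgS, hginj, hgch⟩ :=
      exists_min_chain G B hxy hnxy (side_chain hnbrBx hnbrBy)
    exact no_cycle h hAB (fun hmem => hmem.1 hx) (fun hmem => hmem.1 hy)
      hm2 hf0 hfm hfadj hfS hfinj hfch hl2 hg0 hgl hgadj hgS hginj hgch
  refine ⟨A ∪ C, Aᶜ, ?_, ?_, ?_, ?_, ?_⟩
  · intro hEq
    have : b ∈ A ∪ C := by rw [hEq]; trivial
    rcases this with hmem | hmem
    · exact hbA hmem
    · exact hbC hmem
  · intro hEq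
    have : a ∈ (Aᶜ : Set V) := by rw [hEq]; trivial
    exact this haA
  · ext v
    simp only [Set.mem_union, Set.mem_compl_iff, Set.mem_univ, iff_true]
    tauto
  · refine hclique.subset ?_
    intro v hv
    rcases hv.1 with hmem | hmem
    · exact absurd hmem hv.2
    · exact hmem
  · intro u v hadj
    by_cases hu : u ∈ A
    · left
      refine ⟨Or.inl hu, ?_⟩
      by_cases hvC : v ∈ C
      · exact Or.inr hvC
      · exact Or.inl (hstepA u hu v hadj hvC)
    · by_cases hv : v ∈ A
      · left
        refine ⟨?_, Or.inl hv⟩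
        by_cases huC : u ∈ C
        · exact Or.inr huC
        · exact Or.inl (hstepA v hv u hadj.symm huC)
      · right
        exact ⟨hu, hv⟩
end

section
/- Every finite chordal graph with at least one vertex has a simplicial vertex, i.e., a vertex whose neighborhood induces a complete subgraph. -/
namespace ChordalDirac

open List

variable {V : Type*} {G : SimpleGraph V}

/-! ### getD helper lemmas -/

lemma getD_append_left {α : Type*} {l₁ l₂ : List α} {w : α} {i : ℕ} (h : i < l₁.length) :
    (l₁ ++ l₂).getD i w = l₁.getD i w := by
  rw [List.getD_eq_getElem _ _ (by simp only [List.length_append]; omega),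
    List.getD_eq_getElem _ _ h]
  exact List.getElem_append_left h

lemma getD_append_right {α : Type*} {l₁ l₂ : List α} {w : α} {i : ℕ} (h : l₁.length ≤ i) :
    (l₁ ++ l₂).getD i w = l₂.getD (i - l₁.length) w := by
  rcases Nat.lt_or_ge i (l₁.length + l₂.length) with hlt | hge
  · rw [List.getD_eq_getElem _ _ (by simp only [List.length_append]; omega),
      List.getD_eq_getElem _ _ (by omega)]
    exact List.getElem_append_right h
  · rw [List.getD_eq_default _ _ (by simp only [List.length_append]; omega),
      List.getD_eq_default _ _ (by omega)]

lemma getD_drop {α : Type*} {l : List α} {w : α} {m r : ℕ} :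
    (l.drop m).getD r w = l.getD (m + r) w := by
  rcases Nat.lt_or_ge (m + r) l.length with hlt | hge
  · rw [List.getD_eq_getElem _ _ (by simp only [List.length_drop]; omega),
      List.getD_eq_getElem _ _ hlt]
    exact (List.getElem_drop' (by omega)).symm
  · rw [List.getD_eq_default _ _ (by simp only [List.length_drop]; omega),
      List.getD_eq_default _ _ hge]

lemma getD_take {α : Type*} {l : List α} {w : α} {k m : ℕ} (h : k < m) :
    (l.take m).getD k w = l.getD k w := by
  rcases Nat.lt_or_ge k l.length with hlt | hge
  · rw [List.getD_eq_getElem _ _ (by simp only [List.length_take]; omega),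
      List.getD_eq_getElem _ _ hlt]
    simp [List.getElem_take]
  · rw [List.getD_eq_default _ _ (by simp only [List.length_take]; omega),
      List.getD_eq_default _ _ hge]

lemma getD_reverse {α : Type*} {l : List α} {w : α} {i : ℕ} (h : i < l.length) :
    l.reverse.getD i w = l.getD (l.length - 1 - i) w := by
  rw [List.getD_eq_getElem _ _ (by simp only [List.length_reverse]; omega),
    List.getD_eq_getElem _ _ (by omega)]
  exact List.getElem_reverse _

lemma getD_mem {α : Type*} {l : List α} {w : α} {i : ℕ} (h : i < l.length) :
    l.getD i w ∈ l := by
  rw [List.getD_eq_getElem _ _ h]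
  exact List.getElem_mem _

lemma chainD {l : List V} {w : V} (h : l.Chain' G.Adj) {m : ℕ} (hm : m + 1 < l.length) :
    G.Adj (l.getD m w) (l.getD (m + 1) w) := by
  rw [List.getD_eq_getElem _ _ (by omega), List.getD_eq_getElem _ _ hm]
  have := List.isChain_iff_getElem.1 h m (by omega)
  simpa [List.get_eq_getElem] using this

lemma chainD_of {l : List V} {w : V}
    (h : ∀ m, m + 1 < l.length → G.Adj (l.getD m w) (l.getD (m + 1) w)) :
    l.Chain' G.Adj := by
  refine List.isChain_iff_getElem.2 ?_
  intro m hm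
  have := h m (by omega)
  rw [List.getD_eq_getElem _ _ (by omega), List.getD_eq_getElem _ _ (by omega)] at this
  simpa [List.get_eq_getElem] using this

/-! ### Reachability inside a set -/

def Reach (G : SimpleGraph V) (t : Set V) (x y : V) : Prop :=
  Relation.ReflTransGen (fun u v => G.Adj u v ∧ u ∈ t ∧ v ∈ t) x y

lemma Reach.symm {t : Set V} {x y : V} (h : Reach G t x y) : Reach G t y x :=
  @Std.Symm.symm _ _ (@Relation.ReflTransGen.stdSymm _ (fun u v => G.Adj u v ∧ u ∈ t ∧ v ∈ t)
    ⟨fun _ _ h => ⟨h.1.symm, h.2.2, h.2.1⟩⟩) _ _ h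

lemma Reach.trans {t : Set V} {x y z : V} (h : Reach G t x y) (h' : Reach G t y z) :
    Reach G t x z := Relation.ReflTransGen.trans h h'

lemma reach_component {t : Set V} {a c : V} (hr : Reach G t a c) :
    Reach G {z | z ∈ t ∧ Reach G t a z} a c := by
  induction hr with
  | refl => exact Relation.ReflTransGen.refl
  | tail h1 h2 ih =>
      exact ih.tail ⟨h2.1, ⟨h2.2.1, h1⟩, ⟨h2.2.2, h1.tail h2⟩⟩

/-! ### Good walks -/

/-- `IsGood G t x y l` : `x :: l ++ [y]` is a walk from `x` to `y` with interior `l` inside `t`. -/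
def IsGood (G : SimpleGraph V) (t : Set V) (x y : V) (l : List V) : Prop :=
  (x :: (l ++ [y])).Chain' G.Adj ∧ ∀ v ∈ l, v ∈ t

lemma cc_len (x y : V) (l : List V) : (x :: (l ++ [y])).length = l.length + 2 := by simp

lemma ccD_mid {x y w : V} {l : List V} {k : ℕ} (h1 : 0 < k) (h2 : k ≤ l.length) :
    (x :: (l ++ [y])).getD k w = l.getD (k - 1) w := by
  obtain ⟨m, rfl⟩ : ∃ m, k = m + 1 := ⟨k - 1, by omega⟩
  rw [List.getD_cons_succ, getD_append_left (by omega)]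
  simp

lemma ccD_last {x y w : V} {l : List V} :
    (x :: (l ++ [y])).getD (l.length + 1) w = y := by
  rw [List.getD_cons_succ, getD_append_right (le_refl _)]
  simp

lemma ccD_mem {x y w : V} {l : List V} {k : ℕ} (h1 : 0 < k) (h2 : k ≤ l.length) :
    (x :: (l ++ [y])).getD k w ∈ l := by
  rw [ccD_mid h1 h2]
  exact getD_mem (by omega)

section MinGood

variable {t : Set V} {x y : V} {l : List V}

lemma no_chord (hgood : IsGood G t x y l)
    (hmin : ∀ l', IsGood G t x y l' → l.length ≤ l'.length)
    {i j : ℕ} (hij : i + 1 < j) (hj : j < l.length + 2)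
    (hadj : G.Adj ((x :: (l ++ [y])).getD i x) ((x :: (l ++ [y])).getD j x)) : False := by
  have hj1 : j - 1 ≤ l.length := by omega
  have hil : i ≤ l.length := by omega
  set l' := l.take i ++ l.drop (j - 1) with hl'
  have hlen' : l'.length = i + (l.length - (j - 1)) := by
    simp only [hl', List.length_append, List.length_take, List.length_drop]
    omega
  have hgetA : ∀ k, k ≤ i → (x :: (l' ++ [y])).getD k x = (x :: (l ++ [y])).getD k x := by
    intro k hk
    rcases Nat.eq_zero_or_pos k with rfl | hk0
    · rfl
    · rw [ccD_mid hk0 (by omega), ccD_mid hk0 (by omega), hl',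
        getD_append_left (by simp only [List.length_take]; omega), getD_take (by omega)]
  have hgetB : ∀ k, i < k → k ≤ l'.length + 1 →
      (x :: (l' ++ [y])).getD k x = (x :: (l ++ [y])).getD (k + (j - 1 - i)) x := by
    intro k hk1 hk2
    rcases eq_or_lt_of_le hk2 with heq | hlt
    · rw [heq, ccD_last, show l'.length + 1 + (j - 1 - i) = l.length + 1 from by omega, ccD_last]
    · rw [ccD_mid (by omega) (by omega), ccD_mid (by omega) (by omega), hl',
        getD_append_right (by simp only [List.length_take]; omega)]
      rw [show k - 1 - (l.take i).length = k - 1 - i from by simp only [List.length_take]; omega]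
      rw [getD_drop, show j - 1 + (k - 1 - i) = k + (j - 1 - i) - 1 from by omega]
  have hgood' : IsGood G t x y l' := by
    constructor
    · apply chainD_of (w := x)
      intro m hm
      rw [cc_len] at hm
      by_cases h1 : m + 1 ≤ i
      · rw [hgetA m (by omega), hgetA (m + 1) h1]
        exact chainD hgood.1 (by rw [cc_len]; omega)
      · by_cases h2 : m ≤ i
        · obtain rfl : m = i := by omega
          rw [hgetA m le_rfl, hgetB (m + 1) (by omega) (by omega),
            show m + 1 + (j - 1 - m) = j from by omega]
          exact hadj
        · rw [hgetB m (by omega) (by omega), hgetB (m + 1) (by omega) (by omega),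
            show m + 1 + (j - 1 - i) = (m + (j - 1 - i)) + 1 from by omega]
          exact chainD hgood.1 (by rw [cc_len]; omega)
    · intro v hv
      rcases List.mem_append.1 hv with hv | hv
      · exact hgood.2 v (List.take_subset _ _ hv)
      · exact hgood.2 v (List.drop_subset _ _ hv)
  have := hmin l' hgood'
  omega

lemma good_adj (hgood : IsGood G t x y l)
    (hmin : ∀ l', IsGood G t x y l' → l.length ≤ l'.length)
    {i j : ℕ} (hi : i < l.length + 2) (hj : j < l.length + 2) :
    G.Adj ((x :: (l ++ [y])).getD i x) ((x :: (l ++ [y])).getD j x) ↔ (j = i + 1 ∨ i = j + 1) := by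
  constructor
  · intro had
    rcases lt_trichotomy i j with h | h | h
    · by_cases hji : j = i + 1
      · exact Or.inl hji
      · exact (no_chord hgood hmin (by omega) (by omega) had).elim
    · subst h
      exact (G.irrefl had).elim
    · by_cases hij' : i = j + 1
      · exact Or.inr hij'
      · exact (no_chord hgood hmin (by omega) (by omega) had.symm).elim
  · rintro (rfl | rfl)
    · exact chainD hgood.1 (by rw [cc_len]; omega)
    · exact (chainD hgood.1 (by rw [cc_len]; omega)).symm

lemma good_inj (hgood : IsGood G t x y l)
    (hmin : ∀ l', IsGood G t x y l' → l.length ≤ l'.length)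
    (hxt : x ∉ t) (hyt : y ∉ t) (hxy : x ≠ y)
    {i j : ℕ} (hij : i < j) (hj : j < l.length + 2) :
    (x :: (l ++ [y])).getD i x ≠ (x :: (l ++ [y])).getD j x := by
  intro heq
  by_cases hjl : j = l.length + 1
  · subst hjl
    rw [ccD_last] at heq
    rcases Nat.eq_zero_or_pos i with rfl | hi0
    · exact hxy heq
    · exact hyt (heq ▸ hgood.2 _ (ccD_mem hi0 (by omega)))
  · rcases Nat.lt_or_ge (i + 1) j with h1 | h1
    · have hadj := chainD (w := x) hgood.1 (m := j) (by rw [cc_len]; omega)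
      rw [← heq] at hadj
      exact no_chord hgood hmin (by omega : i + 1 < j + 1) (by omega) hadj
    · obtain rfl : j = i + 1 := by omega
      have hadj := chainD (w := x) hgood.1 (m := i) (by rw [cc_len]; omega)
      rw [heq] at hadj
      exact G.irrefl hadj

end MinGood

lemma good_len_pos {t : Set V} {x y : V} {l : List V} (hgood : IsGood G t x y l)
    (hnadj : ¬ G.Adj x y) : 1 ≤ l.length := by
  rcases l with _ | ⟨a, m⟩
  · exfalso
    apply hnadj
    have := hgood.1
    simp only [List.nil_append] at this
    exact List.isChain_pair.1 this
  · simp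

lemma exists_min_good {t : Set V} {x y : V} (hex : ∃ l, IsGood G t x y l) :
    ∃ l, IsGood G t x y l ∧ ∀ l', IsGood G t x y l' → l.length ≤ l'.length := by
  classical
  obtain ⟨l0, h0⟩ := hex
  have hex' : ∃ n, ∃ l, IsGood G t x y l ∧ l.length = n := ⟨l0.length, l0, h0, rfl⟩
  obtain ⟨l, hl, hlen⟩ := Nat.find_spec hex'
  exact ⟨l, hl, fun l' hl' => le_trans (le_of_eq hlen) (Nat.find_min' hex' ⟨l', hl', rfl⟩)⟩

lemma chain_mem_t {t : Set V} :
    ∀ {a : V} {m : List V},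
      List.Chain (fun u v => G.Adj u v ∧ u ∈ t ∧ v ∈ t) a m → ∀ v ∈ m, v ∈ t := by
  intro a m
  induction m generalizing a with
  | nil => intro _ v hv; simp at hv
  | cons c m ih =>
      intro h v hv
      rcases List.chain_cons.1 h with ⟨h1, h2⟩
      rcases List.mem_cons.1 hv with rfl | hv
      · exact h1.2.2
      · exact ih h2 v hv

lemma chain_snoc {r : V → V → Prop} :
    ∀ {a : V} {m : List V} {b : V}, List.Chain r a m →
      r ((a :: m).getLast (List.cons_ne_nil _ _)) b → List.Chain r a (m ++ [b]) := by
  intro a m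
  induction m generalizing a with
  | nil => intro b _ h; exact List.Chain.cons (by simpa using h) List.Chain.nil
  | cons c m ih =>
      intro b h hlast
      rcases List.chain_cons.1 h with ⟨h1, h2⟩
      exact List.chain_cons.2 ⟨h1, ih h2 (by rwa [List.getLast_cons_cons] at hlast)⟩

lemma exists_good {t : Set V} {x y u w : V} (hu : G.Adj x u) (hut : u ∈ t)
    (hw : G.Adj w y) (hr : Reach G t u w) : ∃ l, IsGood G t x y l := by
  obtain ⟨m, hchain, hlast⟩ := List.exists_isChain_cons_of_relationReflTransGen hr
  refine ⟨u :: m, ?_, ?_⟩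
  · show List.Chain G.Adj x ((u :: m) ++ [y])
    rw [List.cons_append]
    refine List.chain_cons.2 ⟨hu, ?_⟩
    apply chain_snoc (List.Chain.imp (fun _ _ h => h.1) hchain)
    rw [hlast]
    exact hw
  · intro v hv
    rcases List.mem_cons.1 hv with rfl | hv
    · exact hut
    · exact chain_mem_t hchain v hv

/-! ### cycleGraph adjacency arithmetic -/

lemma fin_sub_val {n : ℕ} (i j : Fin n) :
    (i - j).val = if i.val < j.val then n - j.val + i.val else i.val - j.val := by
  have hi := i.isLt
  have hj := j.isLt
  rw [Fin.sub_def]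
  show (n - j.val + i.val) % n = _
  split
  · exact Nat.mod_eq_of_lt (by omega)
  · rw [show n - j.val + i.val = (i.val - j.val) + n from by omega, Nat.add_mod_right]
    exact Nat.mod_eq_of_lt (by omega)

lemma cyc_adj {n : ℕ} (hn : 2 ≤ n) (i j : Fin n) :
    (SimpleGraph.cycleGraph n).Adj i j ↔
      (j.val = i.val + 1 ∨ i.val = j.val + 1 ∨ (i.val = 0 ∧ j.val = n - 1) ∨
        (j.val = 0 ∧ i.val = n - 1)) := by
  rw [SimpleGraph.cycleGraph_adj']
  have hi := i.isLt
  have hj := j.isLt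
  rw [fin_sub_val, fin_sub_val]
  split_ifs <;> omega

/-! ### The cycle construction -/

lemma cycle_contra (hch : IsChordal G) {A B : Set V} {x y : V}
    (hABadj : ∀ p ∈ A, ∀ q ∈ B, ¬ G.Adj p q)
    (hdisj : ∀ z, z ∈ A → z ∈ B → False)
    (hxA : x ∉ A) (hxB : x ∉ B) (hyA : y ∉ A) (hyB : y ∉ B)
    (hxy : x ≠ y) (hnadj : ¬ G.Adj x y)
    (hgA : ∃ l, IsGood G A x y l) (hgB : ∃ l, IsGood G B x y l) : False := by
  obtain ⟨lA, hgoodA, hminA⟩ := exists_min_good hgA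
  obtain ⟨lB, hgoodB, hminB⟩ := exists_min_good hgB
  have hK1 : 1 ≤ lA.length := good_len_pos hgoodA hnadj
  have hM1 : 1 ≤ lB.length := good_len_pos hgoodB hnadj
  have hceq : x :: (lA ++ y :: lB.reverse) = (x :: (lA ++ [y])) ++ lB.reverse := by
    simp
  have hcP : ∀ i, i ≤ lA.length + 1 →
      (x :: (lA ++ y :: lB.reverse)).getD i x = (x :: (lA ++ [y])).getD i x := by
    intro i hi
    rw [hceq]
    exact getD_append_left (by simp; omega)
  have hcQ : ∀ i, lA.length + 1 ≤ i → i < lA.length + lB.length + 2 →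
      (x :: (lA ++ y :: lB.reverse)).getD i x
        = (x :: (lB ++ [y])).getD (lA.length + lB.length + 2 - i) x := by
    intro i h1 h2
    rcases eq_or_lt_of_le h1 with rfl | h1'
    · rw [hcP _ le_rfl,
        show (x :: (lA ++ [y])).getD (lA.length + 1) x = y from ccD_last,
        show lA.length + lB.length + 2 - (lA.length + 1) = lB.length + 1 from by omega]
      exact ccD_last.symm
    · rw [hceq, getD_append_right (by simp; omega),
        show i - (x :: (lA ++ [y])).length = i - (lA.length + 2) from (by simp; try omega),
        getD_reverse (by omega),
        show lB.length - 1 - (i - (lA.length + 2)) = lA.length + lB.length + 2 - i - 1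
          from (by omega)]
      exact (ccD_mid (by omega) (by omega)).symm
  have hc0 : (x :: (lA ++ y :: lB.reverse)).getD 0 x = (x :: (lB ++ [y])).getD 0 x := rfl
  have hmemA : ∀ i, 1 ≤ i → i ≤ lA.length →
      (x :: (lA ++ y :: lB.reverse)).getD i x ∈ A := by
    intro i h1 h2
    rw [hcP i (by omega)]
    exact hgoodA.2 _ (ccD_mem h1 h2)
  have hmemB : ∀ i, lA.length + 2 ≤ i → i < lA.length + lB.length + 2 →
      (x :: (lA ++ y :: lB.reverse)).getD i x ∈ B := by
    intro i h1 h2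
    rw [hcQ i (by omega) h2]
    exact hgoodB.2 _ (ccD_mem (by omega) (by omega))
  have key : ∀ i j : ℕ, i < lA.length + lB.length + 2 → j < lA.length + lB.length + 2 →
      i ≤ j →
      (G.Adj ((x :: (lA ++ y :: lB.reverse)).getD i x)
          ((x :: (lA ++ y :: lB.reverse)).getD j x)
        ↔ (j = i + 1 ∨ i = j + 1 ∨ (i = 0 ∧ j = lA.length + lB.length + 1) ∨
            (j = 0 ∧ i = lA.length + lB.length + 1))) := by
    intro i j hi hj hij
    rcases eq_or_lt_of_le hij with rfl | hlt
    · constructor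
      · intro had
        exact (G.irrefl had).elim
      · intro hcond
        exfalso
        omega
    by_cases hjP : j ≤ lA.length + 1
    · rw [hcP i (by omega), hcP j (by omega),
        good_adj hgoodA hminA (by omega) (by omega)]
      omega
    · by_cases hiQ : lA.length + 1 ≤ i
      · rw [hcQ i hiQ hi, hcQ j (by omega) hj,
          good_adj hgoodB hminB (by omega) (by omega)]
        omega
      · rcases Nat.eq_zero_or_pos i with rfl | hi0
        · rw [hc0, hcQ j (by omega) hj,
            good_adj hgoodB hminB (by omega) (by omega)]
          omega
        · constructor
          · intro had
            exact (hABadj _ (hmemA i (by omega) (by omega)) _ (hmemB j (by omega) hj) had).elim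
          · intro hcond
            exfalso
            omega
  have hinj : ∀ i j : ℕ, i < j → j < lA.length + lB.length + 2 →
      (x :: (lA ++ y :: lB.reverse)).getD i x ≠ (x :: (lA ++ y :: lB.reverse)).getD j x := by
    intro i j hij hj
    by_cases hjP : j ≤ lA.length + 1
    · rw [hcP i (by omega), hcP j (by omega)]
      exact good_inj hgoodA hminA hxA hyA hxy hij (by omega)
    · by_cases hiQ : lA.length + 1 ≤ i
      · rw [hcQ i (by omega) (by omega), hcQ j (by omega) hj]
        exact (good_inj hgoodB hminB hxB hyB hxy
          (show lA.length + lB.length + 2 - j < lA.length + lB.length + 2 - i from by omega)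
          (by omega)).symm
      · rcases Nat.eq_zero_or_pos i with rfl | hi0
        · rw [hc0, hcQ j (by omega) hj]
          exact good_inj hgoodB hminB hxB hyB hxy (by omega) (by omega)
        · intro heq
          exact hdisj _ (hmemA i (by omega) (by omega)) (heq ▸ hmemB j (by omega) hj)
  have hfinj : Function.Injective
      (fun i : Fin (lA.length + lB.length + 2) =>
        (x :: (lA ++ y :: lB.reverse)).getD i.val x) := by
    intro i j hfe
    by_contra hne
    rcases lt_trichotomy i.val j.val with h | h | h
    · exact hinj _ _ h j.isLt hfe
    · exact hne (Fin.ext h)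
    · exact hinj _ _ h i.isLt hfe.symm
  apply hch (lA.length + lB.length + 2) (by omega)
    ⟨fun i => (x :: (lA ++ y :: lB.reverse)).getD i.val x, hfinj⟩
  intro i j
  simp only [Function.Embedding.coeFn_mk]
  rw [cyc_adj (by omega)]
  have hi := i.isLt
  have hj := j.isLt
  rcases le_total i.val j.val with h | h
  · rw [key i.val j.val hi hj h]
    omega
  · rw [SimpleGraph.adj_comm, key j.val i.val hj hi h]
    omega

/-! ### Separators and the main induction -/

/-- `v` is simplicial within `s`. -/
def IsSimpl (G : SimpleGraph V) (s : Finset V) (v : V) : Prop :=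
  ∀ x ∈ s, ∀ y ∈ s, G.Adj v x → G.Adj v y → x ≠ y → G.Adj x y

lemma not_reach_pair {t : Set V} {a b : V} (hab : a ≠ b) (hnadj : ¬ G.Adj a b)
    (ht : ∀ z ∈ t, z = a ∨ z = b) : ¬ Reach G t a b := by
  intro hr
  have key : ∀ c, Reach G t a c → c = a := by
    intro c hc
    induction hc with
    | refl => rfl
    | tail h1 h2 ih =>
        rcases ht _ h2.2.2 with rfl | rfl
        · rfl
        · exact absurd (ih ▸ h2.1) hnadj
  exact hab (key b hr).symm

lemma min_sep_nbr {s S : Finset V} {a b : V}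
    (hSs : S ⊆ s) (haS : a ∉ S) (hbS : b ∉ S) (has : a ∈ s) (hbs : b ∈ s)
    (hsep : ¬ Reach G (↑s \ ↑S) a b)
    (hmin : ∀ S' : Finset V, S' ⊆ s → a ∉ S' → b ∉ S' → ¬ Reach G (↑s \ ↑S') a b →
      S.card ≤ S'.card) :
    ∀ z ∈ S, ∃ u, (u ∈ (↑s \ ↑S : Set V) ∧ Reach G (↑s \ ↑S : Set V) a u) ∧ G.Adj z u := by
  classical
  intro z hzS
  by_contra hno
  push_neg at hno
  have hclaim : ∀ c, Reach G (↑s \ ↑(S.erase z)) a c →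
      c ∈ (↑s \ ↑S : Set V) ∧ Reach G (↑s \ ↑S : Set V) a c := by
    intro c hc
    induction hc with
    | refl =>
        refine ⟨⟨Finset.mem_coe.2 has, fun h => haS (Finset.mem_coe.1 h)⟩,
          Relation.ReflTransGen.refl⟩
    | tail h1 h2 ih =>
        rename_i p q
        by_cases hq : q = z
        · subst hq
          exact absurd h2.1.symm (hno p ih)
        · have hqT : q ∈ (↑s \ ↑S : Set V) := by
            have h3 := h2.2.2
            simp only [Set.mem_diff, Finset.mem_coe, Finset.mem_erase] at h3 ⊢
            tauto
          exact ⟨hqT, ih.2.tail ⟨h2.1, ih.1, hqT⟩⟩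
  have hsep' : ¬ Reach G (↑s \ ↑(S.erase z)) a b := fun hr => hsep (hclaim b hr).2
  have hcard := hmin (S.erase z) ((Finset.erase_subset _ _).trans hSs)
    (fun h => haS (Finset.mem_of_mem_erase h)) (fun h => hbS (Finset.mem_of_mem_erase h)) hsep'
  have hce : (S.erase z).card = S.card - 1 := Finset.card_erase_of_mem hzS
  have hpos : 1 ≤ S.card := Finset.card_pos.2 ⟨z, hzS⟩
  omega

lemma main_ind (hch : IsChordal G) :
    ∀ (N : ℕ) (s : Finset V), s.card ≤ N → s.Nonempty →
      ((∀ x ∈ s, ∀ y ∈ s, x ≠ y → G.Adj x y) ∨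
        ∃ a ∈ s, ∃ b ∈ s, a ≠ b ∧ ¬ G.Adj a b ∧ IsSimpl G s a ∧ IsSimpl G s b) := by
  classical
  intro N
  induction N with
  | zero =>
      intro s hc hne
      exact absurd (Finset.card_pos.2 hne) (by omega)
  | succ N ih =>
      intro s hcard hne
      by_cases hcl : ∀ x ∈ s, ∀ y ∈ s, x ≠ y → G.Adj x y
      · exact Or.inl hcl
      push_neg at hcl
      obtain ⟨a, has, b, hbs, hab, hnadj⟩ := hcl
      -- a minimal a-b separator S in s
      have hS0 : ¬ Reach G (↑s \ ↑((s.erase b).erase a)) a b := by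
        apply not_reach_pair hab hnadj
        rintro z ⟨hz1, hz2⟩
        simp only [Finset.mem_coe, Finset.mem_erase] at hz1 hz2
        tauto
      have hFne : ((s.powerset).filter
          (fun S : Finset V => a ∉ S ∧ b ∉ S ∧ ¬ Reach G (↑s \ ↑S) a b)).Nonempty := by
        refine ⟨(s.erase b).erase a, Finset.mem_filter.2 ⟨Finset.mem_powerset.2
          (((Finset.erase_subset _ _).trans (Finset.erase_subset _ _))), ?_, ?_, hS0⟩⟩
        · simp
        · intro h
          exact absurd (Finset.mem_of_mem_erase h) (by simp)
      obtain ⟨S, hSF, hSmin⟩ := Finset.exists_min_image _ Finset.card hFne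
      rw [Finset.mem_filter, Finset.mem_powerset] at hSF
      have hSs : S ⊆ s := hSF.1
      have haS : a ∉ S := hSF.2.1
      have hbS : b ∉ S := hSF.2.2.1
      have hsep : ¬ Reach G (↑s \ ↑S) a b := hSF.2.2.2
      have hmin' : ∀ S' : Finset V, S' ⊆ s → a ∉ S' → b ∉ S' →
          ¬ Reach G (↑s \ ↑S') a b → S.card ≤ S'.card := by
        intro S' h1 h2 h3 h4
        exact hSmin S' (Finset.mem_filter.2 ⟨Finset.mem_powerset.2 h1, h2, h3, h4⟩)
      set T : Set V := ↑s \ ↑S with hT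
      set A : Set V := {z | z ∈ T ∧ Reach G T a z} with hA
      set B : Set V := {z | z ∈ T ∧ Reach G T b z} with hB
      have haT : a ∈ T := ⟨Finset.mem_coe.2 has, fun h => haS (Finset.mem_coe.1 h)⟩
      have hbT : b ∈ T := ⟨Finset.mem_coe.2 hbs, fun h => hbS (Finset.mem_coe.1 h)⟩
      have haA : a ∈ A := ⟨haT, Relation.ReflTransGen.refl⟩
      have hbB : b ∈ B := ⟨hbT, Relation.ReflTransGen.refl⟩
      have hdisj : ∀ z, z ∈ A → z ∈ B → False := fun z hz1 hz2 => hsep (hz1.2.trans hz2.2.symm)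
      have hAT : ∀ p ∈ A, p ∈ T := fun p hp => hp.1
      have hBT : ∀ p ∈ B, p ∈ T := fun p hp => hp.1
      have hAcl : ∀ p ∈ A, ∀ q, q ∈ T → G.Adj p q → q ∈ A :=
        fun p hp q hq hadj => ⟨hq, hp.2.tail ⟨hadj, hp.1, hq⟩⟩
      have hBcl : ∀ p ∈ B, ∀ q, q ∈ T → G.Adj p q → q ∈ B :=
        fun p hp q hq hadj => ⟨hq, hp.2.tail ⟨hadj, hp.1, hq⟩⟩
      have hcross : ∀ p ∈ A, ∀ q ∈ B, ¬ G.Adj p q := by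
        intro p hp q hq hadj
        exact hdisj q (hAcl p hp q (hBT q hq) hadj) hq
      have hnbrA := min_sep_nbr hSs haS hbS has hbs hsep hmin'
      have hnbrB := min_sep_nbr hSs hbS haS hbs has (fun hr => hsep hr.symm)
        (fun S' h1 h2 h3 h4 => hmin' S' h1 h3 h2 (fun hr => h4 hr.symm))
      -- the separator is a clique
      have hScl : ∀ z ∈ S, ∀ w ∈ S, z ≠ w → G.Adj z w := by
        intro z hz w hw hzw
        by_contra hnzw
        have hzT : z ∉ T := fun h => h.2 (Finset.mem_coe.2 hz)
        have hwT : w ∉ T := fun h => h.2 (Finset.mem_coe.2 hw)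
        obtain ⟨u, huA, hzu⟩ := hnbrA z hz
        obtain ⟨u', hu'A, hwu'⟩ := hnbrA w hw
        obtain ⟨v, hvB, hzv⟩ := hnbrB z hz
        obtain ⟨v', hv'B, hwv'⟩ := hnbrB w hw
        refine cycle_contra hch (A := A) (B := B) hcross hdisj
          (fun h => hzT (hAT z h)) (fun h => hzT (hBT z h))
          (fun h => hwT (hAT w h)) (fun h => hwT (hBT w h)) hzw hnzw ?_ ?_
        · refine exists_good hzu huA hwu'.symm ?_
          exact ((reach_component huA.2).symm.trans (reach_component hu'A.2))
        · refine exists_good hzv hvB hwv'.symm ?_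
          exact ((reach_component hvB.2).symm.trans (reach_component hv'B.2))
      -- on each side of the separator there is a vertex simplicial in s
      have side : ∀ (C : Set V) (c0 w0 : V), c0 ∈ C → w0 ∈ s → w0 ∉ S → w0 ∉ C →
          (∀ p ∈ C, p ∈ T) → (∀ p ∈ C, ∀ q, q ∈ T → G.Adj p q → q ∈ C) →
          ∃ v, v ∈ C ∧ IsSimpl G s v := by
        intro C c0 w0 hc0 hw0s hw0S hw0C hCT hCcl
        set sC : Finset V := S ∪ s.filter (· ∈ C) with hsC
        have hmemsC : ∀ w, w ∈ sC ↔ w ∈ S ∨ (w ∈ s ∧ w ∈ C) := by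
          intro w
          simp [hsC, Finset.mem_union, Finset.mem_filter]
        have hsCs : sC ⊆ s := by
          intro w hw
          rcases (hmemsC w).1 hw with h | h
          exacts [hSs h, h.1]
        have hw0sC : w0 ∉ sC := by
          rw [hmemsC]
          rintro (h | h)
          exacts [hw0S h, hw0C h.2]
        have hltN : sC.card ≤ N := by
          have hss : sC ⊂ s := (Finset.ssubset_iff_of_subset hsCs).2 ⟨w0, hw0s, hw0sC⟩
          have := Finset.card_lt_card hss
          omega
        have hCs : ∀ p ∈ C, p ∈ s := fun p hp => Finset.mem_coe.1 (hCT p hp).1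
        have hnb : ∀ p ∈ C, ∀ w ∈ s, G.Adj p w → w ∈ sC := by
          intro p hp w hws hadj
          rw [hmemsC]
          by_cases hwS : w ∈ S
          · exact Or.inl hwS
          · exact Or.inr ⟨hws, hCcl p hp w
              ⟨Finset.mem_coe.2 hws, fun h => hwS (Finset.mem_coe.1 h)⟩ hadj⟩
        rcases ih sC hltN ⟨c0, (hmemsC c0).2 (Or.inr ⟨hCs c0 hc0, hc0⟩)⟩ with
          hclq | ⟨u, hu, v, hv, huv, hnuv, hsu, hsv⟩
        · refine ⟨c0, hc0, ?_⟩
          intro p hp q hq hap haq hpq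
          exact hclq p (hnb c0 hc0 p hp hap) q (hnb c0 hc0 q hq haq) hpq
        · have hpick : ∃ v', v' ∈ sC ∧ v' ∉ S ∧ IsSimpl G sC v' := by
            by_cases huS : u ∈ S
            · by_cases hvS : v ∈ S
              · exact absurd (hScl u huS v hvS huv) hnuv
              · exact ⟨v, hv, hvS, hsv⟩
            · exact ⟨u, hu, huS, hsu⟩
          obtain ⟨v', hv'sC, hv'S, hsimp⟩ := hpick
          have hv'C : v' ∈ C := by
            rcases (hmemsC v').1 hv'sC with h | h
            · exact absurd h hv'S
            · exact h.2
          refine ⟨v', hv'C, ?_⟩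
          intro p hp q hq hap haq hpq
          exact hsimp p (hnb v' hv'C p hp hap) q (hnb v' hv'C q hq haq) hap haq hpq
      obtain ⟨vA, hvAC, hvAs⟩ := side A a b haA hbs hbS (fun h => hdisj b h hbB) hAT hAcl
      obtain ⟨vB, hvBC, hvBs⟩ := side B b a hbB has haS (fun h => hdisj a haA h) hBT hBcl
      refine Or.inr ⟨vA, Finset.mem_coe.1 (hAT vA hvAC).1, vB, Finset.mem_coe.1 (hBT vB hvBC).1,
        fun h => hdisj vA hvAC (h ▸ hvBC), hcross vA hvAC vB hvBC, hvAs, hvBs⟩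

end ChordalDirac

theorem stmt_13 {V : Type*} [Fintype V] [Nonempty V] (G : SimpleGraph V)
    (h : IsChordal G) :
    ∃ v : V, G.IsClique (G.neighborSet v) := by
  classical
  rcases ChordalDirac.main_ind (G := G) h (Fintype.card V) Finset.univ
      (by simp [Finset.card_univ]) Finset.univ_nonempty with
    hcl | ⟨a, _, b, _, _, _, hsa, _⟩
  · obtain ⟨v⟩ := ‹Nonempty V›
    refine ⟨v, ?_⟩
    intro p hp q hq hpq
    exact hcl p (Finset.mem_univ p) q (Finset.mem_univ q) hpq
  · refine ⟨a, ?_⟩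
    intro p hp q hq hpq
    rw [SimpleGraph.mem_neighborSet] at hp hq
    exact hsa p (Finset.mem_univ p) q (Finset.mem_univ q) hp hq hpq
end

section
/- Suppose a finite simple graph Γ is a complete graph amalgamation of induced subgraphs Γ_1 and Γ_2 with K = Γ_1 ∩ Γ_2, and suppose K is a maximal clique of neither Γ_1 nor Γ_2. Then the simplicial extension satisfies Γ* = Γ_1* ∪ Γ_2* with Γ_1* ∩ Γ_2* = K; i.e., Γ* is a complete graph amalgamation of Γ_1* and Γ_2*. -/
/-- The simplicial extension of the induced subgraph of `G` on `S`, realized as a graph on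
the common vertex type `V ⊕ (Set V × V)`: for each pair `(K, u)` with `K` a maximal clique
of the induced subgraph on `S` and `u ∈ K`, the vertex `Sum.inr (K, u)` is joined exactly
to the vertices of `K`. -/
def ExtGraph {V : Type*} (G : SimpleGraph V) (S : Set V) :
    SimpleGraph (V ⊕ (Set V × V)) where
  Adj x y := match x, y with
    | Sum.inl a, Sum.inl b => a ∈ S ∧ b ∈ S ∧ G.Adj a b
    | Sum.inl a, Sum.inr p => MaxCliqueIn G S p.1 ∧ p.2 ∈ p.1 ∧ a ∈ p.1
    | Sum.inr p, Sum.inl a => MaxCliqueIn G S p.1 ∧ p.2 ∈ p.1 ∧ a ∈ p.1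
    | Sum.inr _, Sum.inr _ => False
  symm := by
    constructor
    rintro (a | p) (b | q) h
    · exact ⟨h.2.1, h.1, h.2.2.symm⟩
    · exact h
    · exact h
    · exact h
  loopless := by
    constructor
    rintro (a | p) h
    · exact G.loopless.irrefl a h.2.2
    · exact h

/-- The vertex set of the simplicial extension of the induced subgraph of `G` on `S`. -/
def ExtVerts {V : Type*} (G : SimpleGraph V) (S : Set V) : Set (V ⊕ (Set V × V)) :=
  Sum.inl '' S ∪ Sum.inr '' {p : Set V × V | MaxCliqueIn G S p.1 ∧ p.2 ∈ p.1}

theorem stmt_15 {V : Type*} [Fintype V] (G : SimpleGraph V) (S₁ S₂ : Set V)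
    (hcover : S₁ ∪ S₂ = Set.univ)
    (hedges : ∀ u v : V, G.Adj u v → (u ∈ S₁ ∧ v ∈ S₁) ∨ (u ∈ S₂ ∧ v ∈ S₂))
    (hK : G.IsClique (S₁ ∩ S₂))
    (hK₁ : ¬ MaxCliqueIn G S₁ (S₁ ∩ S₂))
    (hK₂ : ¬ MaxCliqueIn G S₂ (S₁ ∩ S₂)) :
    ExtGraph G Set.univ = ExtGraph G S₁ ⊔ ExtGraph G S₂ ∧
    ExtVerts G Set.univ = ExtVerts G S₁ ∪ ExtVerts G S₂ ∧
    ExtVerts G S₁ ∩ ExtVerts G S₂ = Sum.inl '' (S₁ ∩ S₂) ∧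
    (ExtGraph G Set.univ).IsClique (Sum.inl '' (S₁ ∩ S₂)) := by

  have hsub : ∀ d : Set V, G.IsClique d → d ⊆ S₁ ∨ d ⊆ S₂ := by
    intro d hd
    by_cases h1 : d ⊆ S₁
    · exact Or.inl h1
    · right
      obtain ⟨v, hvd, hv1⟩ := Set.not_subset.mp h1
      have hv2 : v ∈ S₂ := by
        have : v ∈ S₁ ∪ S₂ := hcover.symm ▸ Set.mem_univ v
        exact this.resolve_left hv1
      intro u hu
      by_cases huv : u = v
      · exact huv ▸ hv2
      · rcases hedges u v (hd hu hvd huv) with ⟨_, h⟩ | ⟨h, _⟩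
        · exact absurd h hv1
        · exact h
  have hmax : ∀ K' : Set V,
      MaxCliqueIn G Set.univ K' ↔ MaxCliqueIn G S₁ K' ∨ MaxCliqueIn G S₂ K' := by
    intro K'
    constructor
    · rintro ⟨-, hcl, hmx⟩
      rcases hsub K' hcl with h | h
      · exact Or.inl ⟨h, hcl, fun d _ hdc hKd => hmx d (Set.subset_univ d) hdc hKd⟩
      · exact Or.inr ⟨h, hcl, fun d _ hdc hKd => hmx d (Set.subset_univ d) hdc hKd⟩
    · rintro (⟨hKS, hcl, hmx⟩ | ⟨hKS, hcl, hmx⟩)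
      · refine ⟨Set.subset_univ _, hcl, fun d _ hdc hKd => ?_⟩
        rcases hsub d hdc with h | h
        · exact hmx d h hdc hKd
        · exfalso
          have hK'K : K' ⊆ S₁ ∩ S₂ := fun x hx => ⟨hKS hx, h (hKd hx)⟩
          have heq := hmx (S₁ ∩ S₂) Set.inter_subset_left hK hK'K
          have hm : MaxCliqueIn G S₁ K' := ⟨hKS, hcl, hmx⟩
          rw [heq] at hm
          exact hK₁ hm
      · refine ⟨Set.subset_univ _, hcl, fun d _ hdc hKd => ?_⟩
        rcases hsub d hdc with h | h
        · exfalso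
          have hK'K : K' ⊆ S₁ ∩ S₂ := fun x hx => ⟨h (hKd hx), hKS hx⟩
          have heq := hmx (S₁ ∩ S₂) Set.inter_subset_right hK hK'K
          have hm : MaxCliqueIn G S₂ K' := ⟨hKS, hcl, hmx⟩
          rw [heq] at hm
          exact hK₂ hm
        · exact hmx d h hdc hKd
  refine ⟨?_, ?_, ?_, ?_⟩
  · ext x y
    rcases x with a | p <;> rcases y with b | q <;>
      simp only [ExtGraph, SimpleGraph.sup_adj, Set.mem_univ, true_and, hmax,
        or_self]
    · constructor
      · intro h
        rcases hedges a b h with ⟨h1, h2⟩ | ⟨h1, h2⟩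
        · exact Or.inl ⟨h1, h2, h⟩
        · exact Or.inr ⟨h1, h2, h⟩
      · rintro (⟨_, _, h⟩ | ⟨_, _, h⟩) <;> exact h
    · tauto
    · tauto
  · ext x
    rcases x with a | p <;>
      simp only [ExtVerts, Set.mem_union, Set.mem_image, Set.mem_setOf_eq, hmax,
        Sum.inl.injEq, Sum.inr.injEq, reduceCtorEq, exists_eq_right, false_and,
        and_false, exists_false, false_or, or_false, Set.mem_univ, true_iff, iff_true]
    · have : a ∈ S₁ ∪ S₂ := hcover.symm ▸ Set.mem_univ a
      tauto
    · tauto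
  · ext x
    rcases x with a | p <;>
      simp only [ExtVerts, Set.mem_inter_iff, Set.mem_union, Set.mem_image,
        Set.mem_setOf_eq, Sum.inl.injEq, Sum.inr.injEq, reduceCtorEq,
        exists_eq_right, false_and, and_false, exists_false, false_or, or_false,
        iff_false, not_and]
    intro h1 hy hm
    obtain ⟨hx, -⟩ := h1
    have hsub12 : p.1 ⊆ S₁ ∩ S₂ := fun z hz => ⟨hx.1 hz, hy.1 hz⟩
    have heq := hx.2.2 (S₁ ∩ S₂) Set.inter_subset_left hK hsub12
    rw [heq] at hx
    exact hK₁ hx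
  · rintro x ⟨a, ha, rfl⟩ y ⟨b, hb, rfl⟩ hxy
    have hab : a ≠ b := fun h => hxy (h ▸ rfl)
    exact ⟨Set.mem_univ a, Set.mem_univ b, hK ha hb hab⟩
end

section
/- Let S be a group all of whose 2-generated subgroups are free, let A and B be groups, and let φ : S → A × B be an injective homomorphism. Then the composition of φ with the projection onto A is injective, or the composition of φ with the projection onto B is injective. -/
open Classical in
private lemma free_comm_aux {G : Type*} [Group G] [IsFreeGroup G]
    (hcomm : ∀ a b : G, a * b = b * a) (x y : G) (hx : x ≠ 1) (hy : y ≠ 1) :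
    ∃ m n : ℤ, x ^ n = y ^ m ∧ x ^ n ≠ 1 := by
  obtain ⟨ι, ⟨b⟩⟩ := IsFreeGroup.nonempty_basis (G := G)
  set e : G ≃* FreeGroup ι := b.repr with he
  have hsub : Subsingleton ι := by
    constructor
    intro a c
    by_contra hac
    set s : Equiv.Perm (Fin 3) := Equiv.swap 0 1 with hs
    set t : Equiv.Perm (Fin 3) := Equiv.swap 1 2 with ht
    set f : ι → Equiv.Perm (Fin 3) := fun i => if i = a then s else t with hf
    have hcomm' : FreeGroup.of a * FreeGroup.of c = FreeGroup.of c * FreeGroup.of a := by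
      have h1 := hcomm (e.symm (FreeGroup.of a)) (e.symm (FreeGroup.of c))
      have h2 := congrArg e h1
      simpa using h2
    have h3 := congrArg (FreeGroup.lift f) hcomm'
    simp only [map_mul, FreeGroup.lift_apply_of] at h3
    have hfa : f a = s := by simp [hf]
    have hca : c ≠ a := fun h => hac h.symm
    have hfc : f c = t := by simp [hf, hca]
    rw [hfa, hfc] at h3
    have : s * t ≠ t * s := by rw [hs, ht]; decide
    exact this h3
  rcases isEmpty_or_nonempty ι with hι | hι
  · have htriv : e x = 1 := by
      rcases e x with ⟨L⟩
      cases L with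
      | nil => rfl
      | cons h t => exact (IsEmpty.false h.1).elim
    exact absurd (e.injective (by rw [htriv, map_one])) hx
  · have : Unique ι := uniqueOfSubsingleton hι.some
    set E : G ≃* FreeGroup Unit :=
      e.trans (FreeGroup.freeGroupCongr (Equiv.ofUnique ι Unit)) with hE
    set σ : FreeGroup Unit ≃ ℤ := FreeGroup.freeGroupUnitEquivInt with hσ
    have hσsymm : ∀ k : ℤ, σ.symm k = FreeGroup.of () ^ k := fun k => rfl
    have hrepr : ∀ z : FreeGroup Unit, FreeGroup.of () ^ (σ z) = z := by
      intro z
      rw [← hσsymm]; exact σ.left_inv z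
    have hinjpow : ∀ k : ℤ, FreeGroup.of () ^ k = 1 → k = 0 := by
      intro k hk
      have : σ.symm k = σ.symm 0 := by rw [hσsymm, hσsymm, hk]; simp
      exact σ.symm.injective this
    set m : ℤ := σ (E x) with hm
    set n : ℤ := σ (E y) with hn
    have hEx : E x = FreeGroup.of () ^ m := (hrepr (E x)).symm
    have hEy : E y = FreeGroup.of () ^ n := (hrepr (E y)).symm
    have hm0 : m ≠ 0 := by
      intro h0
      apply hx
      apply E.injective
      rw [hEx, h0, zpow_zero, map_one]
    have hn0 : n ≠ 0 := by
      intro h0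
      apply hy
      apply E.injective
      rw [hEy, h0, zpow_zero, map_one]
    refine ⟨m, n, ?_, ?_⟩
    · apply E.injective
      rw [map_zpow, map_zpow, hEx, hEy, ← zpow_mul, ← zpow_mul, mul_comm]
    · intro h1
      have : FreeGroup.of () ^ (m * n) = 1 := by
        rw [zpow_mul, ← hEx, ← map_zpow, h1, map_one]
      exact (mul_ne_zero hm0 hn0) (hinjpow _ this)

theorem stmt_19 {S A B : Type*} [Group S] [Group A] [Group B]
    (hfree : ∀ a b : S, IsFreeGroup (Subgroup.closure {a, b}))
    (φ : S →* A × B) (hφ : Function.Injective φ) :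
    Function.Injective ((MonoidHom.fst A B).comp φ) ∨
    Function.Injective ((MonoidHom.snd A B).comp φ) := by
  by_contra hcon
  push_neg at hcon
  obtain ⟨h1, h2⟩ := hcon
  -- extract nontrivial kernel elements
  obtain ⟨x, hx1, hx⟩ : ∃ x : S, (φ x).1 = 1 ∧ x ≠ 1 := by
    rw [Function.not_injective_iff] at h1
    obtain ⟨a, b, hab, hne⟩ := h1
    refine ⟨a * b⁻¹, ?_, by simpa [mul_inv_eq_one] using hne⟩
    simp only [MonoidHom.coe_comp, Function.comp_apply, MonoidHom.coe_fst,
      MonoidHom.coe_snd] at hab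
    simp [map_mul, hab]
  obtain ⟨y, hy2, hy⟩ : ∃ y : S, (φ y).2 = 1 ∧ y ≠ 1 := by
    rw [Function.not_injective_iff] at h2
    obtain ⟨a, b, hab, hne⟩ := h2
    refine ⟨a * b⁻¹, ?_, by simpa [mul_inv_eq_one] using hne⟩
    simp only [MonoidHom.coe_comp, Function.comp_apply, MonoidHom.coe_fst,
      MonoidHom.coe_snd] at hab
    simp [map_mul, hab]
  -- x and y commute
  have hcxy : x * y = y * x := by
    apply hφ
    rw [map_mul, map_mul]
    ext
    · simp [hx1]
    · simp [hy2]
  -- the closure is commutative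
  have hcomm0 : ∀ a ∈ ({x, y} : Set S), ∀ b ∈ ({x, y} : Set S), a * b = b * a := by
    intro a ha b hb
    simp only [Set.mem_insert_iff, Set.mem_singleton_iff] at ha hb
    rcases ha with rfl | rfl <;> rcases hb with rfl | rfl <;>
      first | rfl | exact hcxy | exact hcxy.symm
  haveI := hfree x y
  set H := Subgroup.closure ({x, y} : Set S) with hH
  have hcomm : ∀ a b : H, a * b = b * a := fun a b =>
    (Subgroup.closureCommGroupOfComm hcomm0).mul_comm a b
  have hxH : x ∈ H := Subgroup.subset_closure (by simp)
  have hyH : y ∈ H := Subgroup.subset_closure (by simp)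
  obtain ⟨m, n, heq, hne⟩ := free_comm_aux hcomm (⟨x, hxH⟩ : H) (⟨y, hyH⟩ : H)
    (by simpa [Subtype.ext_iff] using hx) (by simpa [Subtype.ext_iff] using hy)
  -- x^n = y^m in S, and it's in both kernels
  have heqS : x ^ n = y ^ m := by
    have := congrArg (Subtype.val : H → S) heq
    simpa using this
  have hfst : (φ (x ^ n)).1 = 1 := by simp [map_zpow, hx1]
  have hsnd : (φ (x ^ n)).2 = 1 := by rw [heqS]; simp [map_zpow, hy2]
  have : x ^ n = 1 := by
    apply hφ
    rw [map_one, Prod.ext_iff]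
    exact ⟨by simpa using hfst, by simpa using hsnd⟩
  apply hne
  simpa [Subtype.ext_iff] using this
end
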